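/- arXiv:math/0411282 — 2 statements merged into one kernel-verified Lean document; each statement's English description precedes it below -/
import Mathlib

section
/- For each t > 0 there is a unique z(t) ∈ ℂ with 0 < Im z(t) < 2π and e^{−z(t)} + z(t) = 1 − t. The function Y(t) = Im z(t) is strictly increasing on (0,∞), with lim_{t→0+} Y(t) = 0 and lim_{t→∞} Y(t) = π. (Equivalently, the density η(t) = Y(t)/π in the Pick representation of w ↦ f^{−1}(1−w) increases from 0 to 1 on (0,∞).) -/
open Complex Filter Set

noncomputable def gAux (y : ℝ) : ℝ := y * Real.cos y / Real.sin y + Real.log (Real.sin y / y)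

lemma gAux_hasDerivAt {y : ℝ} (hy : y ∈ Set.Ioo 0 Real.pi) :
    HasDerivAt gAux
      (((1 * Real.cos y + y * -Real.sin y) * Real.sin y - y * Real.cos y * Real.cos y) / Real.sin y ^ 2
        + ((Real.cos y * y - Real.sin y * 1) / y ^ 2) / (Real.sin y / y)) y := by
  have hs : (0:ℝ) < Real.sin y := Real.sin_pos_of_pos_of_lt_pi hy.1 hy.2
  have hy0 : y ≠ 0 := hy.1.ne'
  have h1 : HasDerivAt (fun y => y * Real.cos y) (1 * Real.cos y + y * -Real.sin y) y :=
    (hasDerivAt_id y).mul (Real.hasDerivAt_cos y)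
  have h2 := h1.div (Real.hasDerivAt_sin y) hs.ne'
  have h3 := (Real.hasDerivAt_sin y).div (hasDerivAt_id y) hy0
  have h4 := h3.log (by positivity : Real.sin y / y ≠ 0)
  exact h2.add h4

lemma gAux_deriv_neg {y : ℝ} (hy : y ∈ Set.Ioo 0 Real.pi) : deriv gAux y < 0 := by
  have hs : (0:ℝ) < Real.sin y := Real.sin_pos_of_pos_of_lt_pi hy.1 hy.2
  have hy0 : (0:ℝ) < y := hy.1
  rw [(gAux_hasDerivAt hy).deriv]
  have hD : ((1 * Real.cos y + y * -Real.sin y) * Real.sin y - y * Real.cos y * Real.cos y) / Real.sin y ^ 2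
        + ((Real.cos y * y - Real.sin y * 1) / y ^ 2) / (Real.sin y / y)
      = (2 * y * Real.sin y * Real.cos y - y ^ 2 - Real.sin y ^ 2) / (y * Real.sin y ^ 2) := by
    have h := Real.sin_sq_add_cos_sq y
    field_simp
    linear_combination (-(y^2)) * h
  rw [hD]
  apply div_neg_of_neg_of_pos
  · nlinarith [sq_nonneg (y - Real.sin y * Real.cos y), Real.sin_sq_add_cos_sq y,
      mul_pos (mul_pos hs hs) (mul_pos hs hs)]
  · positivity

lemma gAux_anti : StrictAntiOn gAux (Set.Ioo 0 Real.pi) := by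
  apply strictAntiOn_of_deriv_neg (convex_Ioo _ _)
  · exact fun y hy => ((gAux_hasDerivAt hy).continuousAt).continuousWithinAt
  · rw [interior_Ioo]; exact fun y hy => gAux_deriv_neg hy

lemma gAux_cont : ContinuousOn gAux (Set.Ioo 0 Real.pi) :=
  fun y hy => ((gAux_hasDerivAt hy).continuousAt).continuousWithinAt

lemma sin_div_tendsto : Tendsto (fun y : ℝ => Real.sin y / y) (nhdsWithin 0 (Set.Ioi 0)) (nhds 1) := by
  have h := (Real.hasDerivAt_sin 0)
  rw [hasDerivAt_iff_tendsto_slope] at h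
  simp only [Real.cos_zero] at h
  have h2 : Tendsto (slope Real.sin 0) (nhdsWithin 0 (Set.Ioi 0)) (nhds 1) :=
    h.mono_left (nhdsWithin_mono _ (fun x hx => ne_of_gt hx))
  refine h2.congr (fun y => ?_)
  simp [slope_def_field, div_eq_mul_inv, mul_comm]

lemma gAux_tendsto_one : Tendsto gAux (nhdsWithin 0 (Set.Ioi 0)) (nhds 1) := by
  have t1 : Tendsto (fun y : ℝ => y * Real.cos y / Real.sin y) (nhdsWithin 0 (Set.Ioi 0)) (nhds 1) := by
    have hc : Tendsto (fun y : ℝ => Real.cos y) (nhdsWithin 0 (Set.Ioi 0)) (nhds 1) := by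
      have := (Real.continuous_cos.tendsto 0)
      simpa using this.mono_left nhdsWithin_le_nhds
    have := hc.mul (sin_div_tendsto.inv₀ one_ne_zero)
    simp only [mul_one, inv_one] at this
    refine this.congr (fun y => ?_)
    rw [inv_div]
    ring
  have t2 : Tendsto (fun y : ℝ => Real.log (Real.sin y / y)) (nhdsWithin 0 (Set.Ioi 0)) (nhds 0) := by
    have := (Real.continuousAt_log one_ne_zero).tendsto.comp sin_div_tendsto
    rw [Real.log_one] at this
    exact this
  have := t1.add t2
  rw [add_zero] at this
  exact this

lemma mem_Ioo_eventually_lt : Set.Ioo (0:ℝ) Real.pi ∈ nhdsWithin Real.pi (Set.Iio Real.pi) :=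
  Ioo_mem_nhdsLT_of_mem (by constructor <;> [exact Real.pi_pos; exact le_refl _])

lemma gAux_tendsto_atBot : Tendsto gAux (nhdsWithin Real.pi (Set.Iio Real.pi)) atBot := by
  have hsin : Tendsto Real.sin (nhdsWithin Real.pi (Set.Iio Real.pi)) (nhdsWithin 0 (Set.Ioi 0)) := by
    rw [tendsto_nhdsWithin_iff]
    constructor
    · have := (Real.continuous_sin.tendsto Real.pi)
      simpa [Real.sin_pi] using this.mono_left nhdsWithin_le_nhds
    · filter_upwards [mem_Ioo_eventually_lt] with y hy
      exact Real.sin_pos_of_pos_of_lt_pi hy.1 hy.2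
  have hinv : Tendsto (fun y : ℝ => (Real.sin y)⁻¹) (nhdsWithin Real.pi (Set.Iio Real.pi)) atTop :=
    tendsto_inv_nhdsGT_zero.comp hsin
  have hyc : Tendsto (fun y : ℝ => y * Real.cos y) (nhdsWithin Real.pi (Set.Iio Real.pi))
      (nhds (Real.pi * -1)) := by
    have : Tendsto (fun y : ℝ => y * Real.cos y) (nhds Real.pi) (nhds (Real.pi * Real.cos Real.pi)) :=
      (continuous_id.mul Real.continuous_cos).tendsto _
    rw [Real.cos_pi] at this
    exact this.mono_left nhdsWithin_le_nhds
  have t1 : Tendsto (fun y : ℝ => y * Real.cos y / Real.sin y)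
      (nhdsWithin Real.pi (Set.Iio Real.pi)) atBot := by
    have := hyc.neg_mul_atTop (by nlinarith [Real.pi_pos]) hinv
    refine this.congr (fun y => ?_)
    rw [div_eq_mul_inv]
  have t2 : Tendsto (fun y : ℝ => Real.log (Real.sin y / y))
      (nhdsWithin Real.pi (Set.Iio Real.pi)) atBot := by
    refine Real.tendsto_log_nhdsGT_zero.comp ?_
    rw [tendsto_nhdsWithin_iff]
    constructor
    · have : ContinuousAt (fun y : ℝ => Real.sin y / y) Real.pi :=
        Real.continuous_sin.continuousAt.div continuousAt_id Real.pi_ne_zero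
      have h0 := this.tendsto.mono_left (nhdsWithin_le_nhds
        (s := Set.Iio Real.pi))
      simpa [Real.sin_pi] using h0
    · filter_upwards [mem_Ioo_eventually_lt] with y hy
      exact div_pos (Real.sin_pos_of_pos_of_lt_pi hy.1 hy.2) hy.1
  exact Filter.Tendsto.atBot_add_atBot t1 t2

lemma gAux_surj {t : ℝ} (ht : 0 < t) : ∃ y ∈ Set.Ioo 0 Real.pi, gAux y = 1 - t := by
  have hmem0 : Set.Ioo (0:ℝ) Real.pi ∈ nhdsWithin 0 (Set.Ioi 0) :=
    Ioo_mem_nhdsGT_of_mem ⟨le_refl _, Real.pi_pos⟩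
  have h1 : ∀ᶠ y in nhdsWithin (0:ℝ) (Set.Ioi 0), 1 - t < gAux y :=
    gAux_tendsto_one.eventually (eventually_gt_nhds (by linarith))
  obtain ⟨a, ha1, ha2⟩ := (h1.and (eventually_of_mem hmem0 (fun y hy => hy))).exists
  have h2 : ∀ᶠ y in nhdsWithin Real.pi (Set.Iio Real.pi), gAux y < 1 - t :=
    gAux_tendsto_atBot.eventually (eventually_lt_atBot (1 - t))
  obtain ⟨b, hb1, hb2⟩ := (h2.and (eventually_of_mem mem_Ioo_eventually_lt (fun y hy => hy))).exists
  have hab : a < b := by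
    by_contra h
    push_neg at h
    rcases h.lt_or_eq with h | h
    · exact absurd (gAux_anti hb2 ha2 h) (by linarith)
    · rw [h] at hb1; linarith
  have := intermediate_value_Icc' hab.le (gAux_cont.mono (fun y hy =>
    ⟨lt_of_lt_of_le ha2.1 hy.1, lt_of_le_of_lt hy.2 hb2.2⟩))
  obtain ⟨y, hy, hgy⟩ := this ⟨hb1.le, ha1.le⟩
  exact ⟨y, ⟨lt_of_lt_of_le ha2.1 hy.1, lt_of_le_of_lt hy.2 hb2.2⟩, hgy⟩

noncomputable def yAux (t : ℝ) : ℝ := if h : 0 < t then (gAux_surj h).choose else 1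

lemma yAux_spec {t : ℝ} (ht : 0 < t) :
    yAux t ∈ Set.Ioo 0 Real.pi ∧ gAux (yAux t) = 1 - t := by
  rw [yAux, dif_pos ht]
  obtain ⟨h1, h2⟩ := (gAux_surj ht).choose_spec
  exact ⟨h1, h2⟩

noncomputable def zAux (t : ℝ) : ℂ :=
  ((Real.log (Real.sin (yAux t) / yAux t) : ℝ) : ℂ) + (yAux t : ℝ) * Complex.I

lemma zAux_im (t : ℝ) : (zAux t).im = yAux t := by simp [zAux]

lemma key_eq {y : ℝ} (hy : y ∈ Set.Ioo 0 Real.pi) :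
    Complex.exp (-(((Real.log (Real.sin y / y) : ℝ) : ℂ) + (y : ℝ) * Complex.I))
      + (((Real.log (Real.sin y / y) : ℝ) : ℂ) + (y : ℝ) * Complex.I) = ((gAux y : ℝ) : ℂ) := by
  have hs : (0:ℝ) < Real.sin y := Real.sin_pos_of_pos_of_lt_pi hy.1 hy.2
  have hexp : Real.exp (-(Real.log (Real.sin y / y))) = y / Real.sin y := by
    rw [Real.exp_neg, Real.exp_log (div_pos hs hy.1), inv_div]
  apply Complex.ext
  · simp only [Complex.add_re, Complex.exp_re, Complex.neg_re, Complex.neg_im,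
      Complex.ofReal_re, Complex.mul_re, Complex.mul_im, Complex.I_re, Complex.I_im,
      Complex.ofReal_im, Complex.add_im]
    rw [gAux]
    rw [show -(Real.log (Real.sin y / y) + (y * 0 - 0 * 1)) = -Real.log (Real.sin y / y) by ring,
      show -(0 + (y * 1 + 0 * 0)) = -y by ring, hexp, Real.cos_neg]
    field_simp
    ring
  · simp only [Complex.add_im, Complex.exp_im, Complex.neg_re, Complex.neg_im,
      Complex.ofReal_re, Complex.mul_re, Complex.mul_im, Complex.I_re, Complex.I_im,
      Complex.ofReal_im, Complex.add_re]
    rw [show -(Real.log (Real.sin y / y) + (y * 0 - 0 * 1)) = -Real.log (Real.sin y / y) by ring,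
      show -(0 + (y * 1 + 0 * 0)) = -y by ring, hexp, Real.sin_neg]
    field_simp
    ring

lemma uniq_aux {t : ℝ} (ht : 0 < t) {w : ℂ} (h1 : 0 < w.im) (h2 : w.im < 2 * Real.pi)
    (h3 : Complex.exp (-w) + w = 1 - (t : ℂ)) : w = zAux t := by
  set a := w.re with ha0
  set b := w.im with hb0
  have him := congrArg Complex.im h3
  have hre := congrArg Complex.re h3
  simp only [Complex.add_im, Complex.exp_im, Complex.neg_re, Complex.neg_im, Complex.sub_im,
    Complex.one_im, Complex.ofReal_im, Real.sin_neg, Complex.add_re, Complex.exp_re,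
    Complex.sub_re, Complex.one_re, Complex.ofReal_re, Real.cos_neg, zero_sub, neg_zero] at him hre
  -- him : Real.exp (-a) * -Real.sin b + b = 0
  have hsin_eq : Real.exp (-a) * Real.sin b = b := by linarith
  have hsb : 0 < Real.sin b := by
    nlinarith [Real.exp_pos (-a)]
  have hbpi : b < Real.pi := by
    by_contra h
    push_neg at h
    rcases h.lt_or_eq with h | h
    · have : Real.sin (b - Real.pi) > 0 :=
        Real.sin_pos_of_pos_of_lt_pi (by linarith) (by linarith)
      have hsb2 : Real.sin b = -Real.sin (b - Real.pi) := by
        have := Real.sin_add_pi (b - Real.pi)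
        rw [show b - Real.pi + Real.pi = b by ring] at this
        linarith
      linarith
    · rw [← h, Real.sin_pi] at hsb; linarith
  have hexpa : Real.exp (-a) = b / Real.sin b := by
    field_simp at hsin_eq ⊢
    linarith [hsin_eq]
  have ha : a = Real.log (Real.sin b / b) := by
    have : Real.exp a = Real.sin b / b := by
      rw [Real.exp_neg] at hexpa
      rw [← inv_inv (Real.exp a), hexpa, inv_div]
    rw [← this, Real.log_exp]
  have hgb : gAux b = 1 - t := by
    rw [gAux, ← ha]
    rw [hexpa] at hre
    field_simp at hre ⊢
    linarith [hre]
  have hbmem : b ∈ Set.Ioo 0 Real.pi := ⟨h1, hbpi⟩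
  obtain ⟨hymem, hyeq⟩ := yAux_spec ht
  have hby : b = yAux t := by
    have := gAux_anti.injOn hbmem hymem (by rw [hgb, hyeq])
    exact this
  have hz : zAux t = ((Real.log (Real.sin b / b) : ℝ) : ℂ) + (b : ℝ) * Complex.I := by
    rw [zAux, ← hby]
  apply Complex.ext
  · rw [hz]
    simpa using ha
  · rw [hz]
    simp
    exact hb0.symm

/-- For each `t > 0` there is a unique `z(t) ∈ ℂ` with
`0 < Im z(t) < 2π` and `e^{−z(t)} + z(t) = 1 − t`; the function `Y(t) = Im z(t)` is
strictly increasing on `(0,∞)` with `Y(t) → 0` as `t → 0+` and `Y(t) → π` as `t → ∞`. -/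
theorem pick_density_of_inverse :
    ∃ z : ℝ → ℂ,
      (∀ t > (0:ℝ),
        (0 < (z t).im ∧ (z t).im < 2 * Real.pi ∧
          Complex.exp (-(z t)) + z t = 1 - (t : ℂ)) ∧
        ∀ w : ℂ, (0 < w.im ∧ w.im < 2 * Real.pi ∧
          Complex.exp (-w) + w = 1 - (t : ℂ)) → w = z t) ∧
      StrictMonoOn (fun t => (z t).im) (Set.Ioi 0) ∧
      Tendsto (fun t => (z t).im) (nhdsWithin 0 (Set.Ioi 0)) (nhds 0) ∧
      Tendsto (fun t => (z t).im) atTop (nhds Real.pi) := by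
  refine ⟨zAux, fun t ht => ?_, ?_, ?_, ?_⟩
  · obtain ⟨hymem, hyeq⟩ := yAux_spec ht
    refine ⟨⟨?_, ?_, ?_⟩, fun w hw => uniq_aux ht hw.1 hw.2.1 hw.2.2⟩
    · rw [zAux_im]; exact hymem.1
    · rw [zAux_im]; have := hymem.2; nlinarith [Real.pi_pos]
    · have hk := key_eq hymem
      rw [hyeq] at hk
      rw [zAux, hk]
      push_cast
      ring
  · intro s hs t htt hst
    rw [Set.mem_Ioi] at hs htt
    simp only [zAux_im]
    obtain ⟨hsm, hse⟩ := yAux_spec hs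
    obtain ⟨htm, hte⟩ := yAux_spec htt
    have h : gAux (yAux t) < gAux (yAux s) := by rw [hse, hte]; linarith
    exact (gAux_anti.lt_iff_gt htm hsm).1 h
  · rw [tendsto_order]
    constructor
    · intro x hx
      filter_upwards [self_mem_nhdsWithin] with t ht
      rw [Set.mem_Ioi] at ht
      rw [zAux_im]
      have := (yAux_spec ht).1.1
      linarith
    · intro x hx
      set c := min x (Real.pi / 2) with hcdef
      have hc : c ∈ Set.Ioo 0 Real.pi := by
        constructor
        · exact lt_min hx (by positivity)
        · exact lt_of_le_of_lt (min_le_right _ _) (by linarith [Real.pi_pos])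
      have hc2 : gAux c < 1 := by
        have hcm : c / 2 ∈ Set.Ioo 0 Real.pi := ⟨by positivity, by linarith [hc.1, hc.2]⟩
        have h1 : gAux c < gAux (c / 2) := gAux_anti hcm hc (by linarith [hc.1])
        have h2 : gAux (c / 2) ≤ 1 := by
          refine ge_of_tendsto gAux_tendsto_one ?_
          filter_upwards [Ioo_mem_nhdsGT_of_mem
            (show (0:ℝ) ∈ Set.Ico 0 (c / 2) from ⟨le_refl 0, by positivity⟩)] with y hy
          exact (gAux_anti ⟨hy.1, lt_trans hy.2 hcm.2⟩ hcm hy.2).le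
        linarith
      filter_upwards [Ioo_mem_nhdsGT_of_mem
        (show (0:ℝ) ∈ Set.Ico 0 (1 - gAux c) from ⟨le_refl 0, by linarith⟩)] with t ht
      obtain ⟨hm, he⟩ := yAux_spec ht.1
      rw [zAux_im]
      have h : gAux c < gAux (yAux t) := by rw [he]; linarith [ht.2]
      have := (gAux_anti.lt_iff_gt hc hm).1 h
      exact lt_of_lt_of_le this (min_le_left _ _)
  · rw [tendsto_order]
    constructor
    · intro x hx
      rcases le_or_gt x 0 with h | h
      · filter_upwards [eventually_gt_atTop 0] with t ht
        rw [zAux_im]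
        have := (yAux_spec ht).1.1
        linarith
      · have hxm : x ∈ Set.Ioo 0 Real.pi := ⟨h, hx⟩
        filter_upwards [eventually_gt_atTop (max 1 (1 - gAux x))] with t ht
        have ht0 : (0:ℝ) < t := lt_of_lt_of_le one_pos (le_of_lt (lt_of_le_of_lt (le_max_left _ _) ht))
        obtain ⟨hm, he⟩ := yAux_spec ht0
        rw [zAux_im]
        have hh : gAux (yAux t) < gAux x := by
          rw [he]
          have := lt_of_le_of_lt (le_max_right 1 (1 - gAux x)) ht
          linarith
        exact (gAux_anti.lt_iff_gt hm hxm).1 hh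
    · intro x hx
      filter_upwards [eventually_gt_atTop 0] with t ht
      rw [zAux_im]
      have := (yAux_spec ht).1.2
      linarith
end

section
/- For every x > 0, Watson's function θ(x) = 1 + (x/2)·( ∫_0^1 (t e^{1−t})^x dt − ∫_1^∞ (t e^{1−t})^x dt ) satisfies θ(x) = (x/2)·∫_0^∞ e^{−xt} ξ(t+1) dt = 1/3 + (1/2)·∫_0^∞ e^{−xt} ξ'(t+1) dt, where ξ' is the derivative of ξ on (1,∞). -/
set_option linter.dupNamespace false

open MeasureTheory Filter Set Topology

namespace WatsonAux

noncomputable def fw (s : ℝ) : ℝ := Real.exp (-s) + s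

lemma fw_deriv (s : ℝ) : HasDerivAt fw (1 - Real.exp (-s)) s := by
  have h1 : HasDerivAt (fun s : ℝ => Real.exp (-s)) (-Real.exp (-s)) s := by
    simpa [Function.comp_def] using (Real.hasDerivAt_exp (-s)).comp s (hasDerivAt_neg s)
  have := h1.add (hasDerivAt_id s)
  exact this.congr_deriv (by ring)

lemma fw_strictMonoOn : StrictMonoOn fw (Ici 0) := by
  refine strictMonoOn_of_deriv_pos (convex_Ici 0) ?_ ?_
  · exact fun s _ => (fw_deriv s).differentiableAt.continuousAt.continuousWithinAt
  · intro s hs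
    rw [interior_Ici] at hs
    rw [(fw_deriv s).deriv]
    have : Real.exp (-s) < 1 := by
      rw [Real.exp_lt_one_iff]; simpa using hs.out
    linarith

lemma fw_strictAntiOn : StrictAntiOn fw (Iic 0) := by
  refine strictAntiOn_of_deriv_neg (convex_Iic 0) ?_ ?_
  · exact fun s _ => (fw_deriv s).differentiableAt.continuousAt.continuousWithinAt
  · intro s hs
    rw [interior_Iic] at hs
    rw [(fw_deriv s).deriv]
    have : 1 < Real.exp (-s) := by
      rw [Real.one_lt_exp_iff]  -- guess name
      simpa using hs.out
    linarith

lemma fw_inj_nonneg {a b : ℝ} (ha : 0 ≤ a) (hb : 0 ≤ b) (h : fw a = fw b) : a = b :=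
  fw_strictMonoOn.injOn ha hb h

lemma fw_inj_nonpos {a b : ℝ} (ha : a ≤ 0) (hb : b ≤ 0) (h : fw a = fw b) : a = b :=
  fw_strictAntiOn.injOn ha hb h

noncomputable def psi (t : ℝ) : ℝ := t - Real.log t - 1

lemma psi_hasDerivAt {t : ℝ} (ht : t ≠ 0) : HasDerivAt psi (1 - t⁻¹) t := by
  have := ((hasDerivAt_id t).sub (Real.hasDerivAt_log ht)).sub_const 1
  exact this

lemma psi_cont : ContinuousOn psi (Ioi 0) := by
  intro t ht
  exact ((psi_hasDerivAt (ne_of_gt ht)).differentiableAt).continuousAt.continuousWithinAt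

lemma psi_pos_Ioo {t : ℝ} (h : t ∈ Ioo 0 1) : 0 < psi t := by
  have := Real.log_lt_sub_one_of_pos h.1 (ne_of_lt h.2)
  simp only [psi]; linarith

lemma psi_pos_Ioi {t : ℝ} (h : 1 < t) : 0 < psi t := by
  have := Real.log_lt_sub_one_of_pos (by linarith : (0:ℝ) < t) (ne_of_gt h)
  simp only [psi]; linarith

lemma psi_strictAntiOn : StrictAntiOn psi (Ioo 0 1) := by
  refine strictAntiOn_of_deriv_neg (convex_Ioo 0 1) (psi_cont.mono (fun t ht => ht.1)) ?_
  intro t ht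
  rw [interior_Ioo] at ht
  rw [(psi_hasDerivAt (ne_of_gt ht.1)).deriv]
  have : 1 < t⁻¹ := (one_lt_inv₀ ht.1).2 ht.2
  linarith

lemma psi_strictMonoOn : StrictMonoOn psi (Ioi 1) := by
  refine strictMonoOn_of_deriv_pos (convex_Ioi 1) (psi_cont.mono (fun t ht => by
    simp only [mem_Ioi] at ht ⊢; linarith)) ?_
  intro t ht
  rw [interior_Ioi] at ht
  have ht' : 1 < t := ht
  rw [(psi_hasDerivAt (by linarith : t ≠ 0)).deriv]
  have : t⁻¹ < 1 := by
    rw [inv_lt_one_iff₀]; right; exact ht'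
  linarith

lemma psi_image_Ioo : psi '' (Ioo 0 1) = Ioi 0 := by
  apply Subset.antisymm
  · rintro s ⟨t, ht, rfl⟩; exact psi_pos_Ioo ht
  · intro s hs
    have hs' : 0 < s := hs
    have h1 : Real.exp (-(s+1)) ≤ 1 := Real.exp_le_one_iff.2 (by linarith)  -- check name
    have h2 : psi (Real.exp (-(s+1))) = Real.exp (-(s+1)) + s := by
      simp [psi, Real.log_exp]; ring
    have h3 : psi 1 = 0 := by simp [psi]
    have := intermediate_value_Ioo' (α := ℝ) (a := Real.exp (-(s+1))) (b := 1) h1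
      (psi_cont.mono (fun t ht => lt_of_lt_of_le (Real.exp_pos _) ht.1))
    have hmem : s ∈ Ioo (psi 1) (psi (Real.exp (-(s+1)))) := by
      rw [h2, h3]; exact ⟨hs', by linarith [Real.exp_pos (-(s+1))]⟩
    obtain ⟨t, ht, rfl⟩ := this hmem
    exact ⟨t, ⟨lt_of_lt_of_le (Real.exp_pos _) (le_of_lt ht.1), ht.2⟩, rfl⟩
    -- careful: ht : t ∈ Ioo (exp (-(s+1))) 1
lemma psi_image_Ioi : psi '' (Ioi 1) = Ioi 0 := by
  apply Subset.antisymm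
  · rintro s ⟨t, ht, rfl⟩; exact psi_pos_Ioi ht
  · intro s hs
    have hs' : 0 < s := hs
    have h1 : (1:ℝ) ≤ Real.exp (s+1) := Real.one_le_exp (by linarith)
    have h2 : psi (Real.exp (s+1)) = Real.exp (s+1) - s - 2 := by
      simp [psi, Real.log_exp]; ring
    have h3 : psi 1 = 0 := by simp [psi]
    have hgt : s < psi (Real.exp (s+1)) := by
      rw [h2]
      have := Real.add_one_le_exp (s+1)
      have h4 : (s+1)^2/2 + (s+1) + 1 ≤ Real.exp (s+1) := by
        have := Real.quadratic_le_exp_of_nonneg (by linarith : (0:ℝ) ≤ s+1)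
        linarith
      nlinarith [sq_nonneg s]
    have := intermediate_value_Ioo (α := ℝ) (a := 1) (b := Real.exp (s+1)) h1
      (psi_cont.mono (fun t ht => by simp only [mem_Ioi]; linarith [ht.1]))
    obtain ⟨t, ht, rfl⟩ := this (by rw [h3]; exact ⟨hs', hgt⟩)
    exact ⟨t, ht.1, rfl⟩

lemma rpow_eq_exp_psi {t : ℝ} (ht : 0 < t) (x : ℝ) :
    (t * Real.exp (1 - t)) ^ x = Real.exp (-x * psi t) := by
  rw [Real.rpow_def_of_pos (by positivity), Real.log_mul (ne_of_gt ht) (Real.exp_ne_zero _),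
    Real.log_exp]
  ring_nf
  congr 1
  simp [psi]; ring

lemma cont_pow {x : ℝ} (hx : 0 < x) : Continuous (fun t : ℝ => (t * Real.exp (1 - t)) ^ x) := by
  apply Continuous.rpow_const
  · exact continuous_id.mul (Real.continuous_exp.comp (continuous_const.sub continuous_id))
  · exact fun t => Or.inr hx.le

lemma integrableOn_pow_Ioo {x : ℝ} (hx : 0 < x) :
    IntegrableOn (fun t : ℝ => (t * Real.exp (1 - t)) ^ x) (Ioo 0 1) := by
  apply Measure.integrableOn_of_bounded (M := 1)
  · simp [Real.volume_Ioo]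
  · exact (cont_pow hx).aestronglyMeasurable
  · filter_upwards [ae_restrict_mem measurableSet_Ioo] with t ht
    have h0 : (0:ℝ) < t := ht.1
    have hb : (0:ℝ) < t * Real.exp (1 - t) := mul_pos h0 (Real.exp_pos _)
    rw [Real.norm_eq_abs, abs_of_nonneg (Real.rpow_nonneg hb.le x)]
    apply Real.rpow_le_one hb.le _ hx.le
    have h := Real.add_one_le_exp (t-1)
    have hmul : Real.exp (t-1) * Real.exp (1-t) = 1 := by rw [← Real.exp_add]; norm_num
    nlinarith [Real.exp_pos (1-t)]

lemma log_le_half (t : ℝ) (ht : 1 ≤ t) : Real.log t ≤ t / 2 := by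
  have h0 : (0:ℝ) < t := by linarith
  have hs : Real.sqrt t ^ 2 = t := Real.sq_sqrt (le_of_lt h0)
  have h1 : Real.log t = 2 * Real.log (Real.sqrt t) := by
    calc Real.log t = Real.log (Real.sqrt t ^ 2) := by rw [hs]
    _ = 2 * Real.log (Real.sqrt t) := by rw [Real.log_pow]; norm_num
  have h2 : Real.log (Real.sqrt t) ≤ Real.sqrt t - 1 :=
    Real.log_le_sub_one_of_pos (Real.sqrt_pos.2 h0)
  nlinarith [sq_nonneg (Real.sqrt t - 2)]

lemma integrableOn_pow_Ioi {x : ℝ} (hx : 0 < x) :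
    IntegrableOn (fun t : ℝ => (t * Real.exp (1 - t)) ^ x) (Ioi 1) := by
  have hint : IntegrableOn (fun t : ℝ => Real.exp x * Real.exp (-(x/2) * t)) (Ioi 1) :=
    (exp_neg_integrableOn_Ioi 1 (by linarith)).const_mul _
  apply hint.mono'
  · exact (cont_pow hx).aestronglyMeasurable
  · filter_upwards [ae_restrict_mem measurableSet_Ioi] with t ht
    have ht' : (1:ℝ) < t := ht
    have h0 : (0:ℝ) < t := by linarith
    rw [Real.norm_eq_abs, abs_of_nonneg (Real.rpow_nonneg (by positivity) x)]
    rw [Real.rpow_def_of_pos (by positivity), Real.log_mul (ne_of_gt h0) (Real.exp_ne_zero _),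
      Real.log_exp, ← Real.exp_add]
    apply Real.exp_le_exp.2
    have := log_le_half t (le_of_lt ht')
    nlinarith
lemma fw_one_le {s : ℝ} : 1 ≤ fw s := by
  have := Real.add_one_le_exp (-s)
  simp only [fw]; linarith

section vlem
variable {v u : ℝ → ℝ}
variable (hv : ∀ t ≥ (1:ℝ), 0 ≤ v t ∧ Real.exp (-(v t)) + v t = t)
variable (hu : ∀ t ≥ (1:ℝ), u t ≤ 0 ∧ Real.exp (-(u t)) + u t = t)

include hv in
lemma v_fw {t : ℝ} (ht : 1 ≤ t) : fw (v t) = t := (hv t ht).2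

include hu in
lemma u_fw {t : ℝ} (ht : 1 ≤ t) : fw (u t) = t := (hu t ht).2

include hv in
lemma v_pos {t : ℝ} (ht : 1 < t) : 0 < v t := by
  rcases (hv t ht.le) with ⟨h0, h1⟩
  rcases lt_or_eq_of_le h0 with h | h
  · exact h
  · exfalso
    rw [← h] at h1
    simp at h1
    linarith

include hu in
lemma u_neg {t : ℝ} (ht : 1 < t) : u t < 0 := by
  rcases (hu t ht.le) with ⟨h0, h1⟩
  rcases lt_or_eq_of_le h0 with h | h
  · exact h
  · exfalso
    rw [h] at h1
    simp at h1
    linarith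

include hv in
lemma v_lt_of_lt {s t : ℝ} (hs : 1 ≤ s) (hst : s < t) : v s < v t := by
  by_contra hc
  push_neg at hc
  rcases lt_or_eq_of_le hc with h | h
  · have := fw_strictMonoOn (hv t (by linarith)).1 (hv s hs).1 h
    rw [v_fw hv hs, v_fw hv (by linarith)] at this
    linarith
  · have := congrArg fw h
    rw [v_fw hv hs, v_fw hv (by linarith)] at this
    linarith

include hu in
lemma u_gt_of_lt {s t : ℝ} (hs : 1 ≤ s) (hst : s < t) : u t < u s := by
  by_contra hc
  push_neg at hc
  rcases lt_or_eq_of_le hc with h | h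
  · have := fw_strictAntiOn (hu s hs).1 (hu t (by linarith)).1 h
    rw [u_fw hu hs, u_fw hu (by linarith)] at this
    linarith
  · have := congrArg fw h
    rw [u_fw hu hs, u_fw hu (by linarith)] at this
    linarith

include hv in
lemma v_continuousAt {t₀ : ℝ} (ht₀ : 1 < t₀) : ContinuousAt v t₀ := by
  rw [Metric.continuousAt_iff]
  intro ε hε
  have hv₀ : 0 < v t₀ := v_pos hv ht₀
  set ε' := min (ε/2) (v t₀ / 2) with hε'
  have hε'pos : 0 < ε' := lt_min (by linarith) (by linarith)
  have hε'le : ε' ≤ v t₀ / 2 := min_le_right _ _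
  have hlow : 0 ≤ v t₀ - ε' := by linarith
  have h1 : fw (v t₀ - ε') < t₀ := by
    have := fw_strictMonoOn hlow (hv t₀ ht₀.le).1 (by linarith)
    rwa [v_fw hv ht₀.le] at this
  have h2 : t₀ < fw (v t₀ + ε') := by
    have := fw_strictMonoOn (hv t₀ ht₀.le).1 (by linarith : (0:ℝ) ≤ v t₀ + ε') (by linarith)
    rwa [v_fw hv ht₀.le] at this
  refine ⟨min (min (t₀ - fw (v t₀ - ε')) (fw (v t₀ + ε') - t₀)) (t₀ - 1),
    lt_min (lt_min (by linarith) (by linarith)) (by linarith), ?_⟩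
  intro t ht
  rw [Real.dist_eq] at ht ⊢
  have hd1 : |t - t₀| < t₀ - fw (v t₀ - ε') := lt_of_lt_of_le ht (le_trans (min_le_left _ _) (min_le_left _ _))
  have hd2 : |t - t₀| < fw (v t₀ + ε') - t₀ := lt_of_lt_of_le ht (le_trans (min_le_left _ _) (min_le_right _ _))
  have hd3 : |t - t₀| < t₀ - 1 := lt_of_lt_of_le ht (min_le_right _ _)
  rw [abs_lt] at hd1 hd2 hd3
  have ht1 : 1 < t := by linarith
  have hA : v t₀ - ε' < v t := by
    by_contra hc
    push_neg at hc
    have := fw_strictMonoOn.monotoneOn (hv t ht1.le).1 hlow hc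
    rw [v_fw hv ht1.le] at this
    linarith
  have hB : v t < v t₀ + ε' := by
    by_contra hc
    push_neg at hc
    have := fw_strictMonoOn.monotoneOn (by linarith : (0:ℝ) ≤ v t₀ + ε') (hv t ht1.le).1 hc
    rw [v_fw hv ht1.le] at this
    linarith
  rw [abs_lt]
  constructor
  · have : ε' ≤ ε/2 := min_le_left _ _
    linarith
  · have : ε' ≤ ε/2 := min_le_left _ _
    linarith

include hu in
lemma u_continuousAt {t₀ : ℝ} (ht₀ : 1 < t₀) : ContinuousAt u t₀ := by
  rw [Metric.continuousAt_iff]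
  intro ε hε
  have hu₀ : u t₀ < 0 := u_neg hu ht₀
  set ε' := min (ε/2) (-u t₀ / 2) with hε'
  have hε'pos : 0 < ε' := lt_min (by linarith) (by linarith)
  have hε'le : ε' ≤ -u t₀ / 2 := min_le_right _ _
  have hhigh : u t₀ + ε' ≤ 0 := by linarith
  have h1 : fw (u t₀ + ε') < t₀ := by
    have := fw_strictAntiOn (hu t₀ ht₀.le).1 hhigh (by linarith)
    rwa [u_fw hu ht₀.le] at this
  have h2 : t₀ < fw (u t₀ - ε') := by
    have := fw_strictAntiOn (by linarith : u t₀ - ε' ≤ (0:ℝ)) (hu t₀ ht₀.le).1 (by linarith)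
    rwa [u_fw hu ht₀.le] at this
  refine ⟨min (min (t₀ - fw (u t₀ + ε')) (fw (u t₀ - ε') - t₀)) (t₀ - 1),
    lt_min (lt_min (by linarith) (by linarith)) (by linarith), ?_⟩
  intro t ht
  rw [Real.dist_eq] at ht ⊢
  have hd1 : |t - t₀| < t₀ - fw (u t₀ + ε') := lt_of_lt_of_le ht (le_trans (min_le_left _ _) (min_le_left _ _))
  have hd2 : |t - t₀| < fw (u t₀ - ε') - t₀ := lt_of_lt_of_le ht (le_trans (min_le_left _ _) (min_le_right _ _))
  have hd3 : |t - t₀| < t₀ - 1 := lt_of_lt_of_le ht (min_le_right _ _)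
  rw [abs_lt] at hd1 hd2 hd3
  have ht1 : 1 < t := by linarith
  have hA : u t₀ - ε' < u t := by
    by_contra hc
    push_neg at hc
    have := fw_strictAntiOn.antitoneOn (hu t ht1.le).1 (by linarith : u t₀ - ε' ≤ (0:ℝ)) hc
    rw [u_fw hu ht1.le] at this
    linarith
  have hB : u t < u t₀ + ε' := by
    by_contra hc
    push_neg at hc
    have := fw_strictAntiOn.antitoneOn hhigh (hu t ht1.le).1 hc
    rw [u_fw hu ht1.le] at this
    linarith
  rw [abs_lt]
  constructor
  · have : ε' ≤ ε/2 := min_le_left _ _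
    linarith
  · have : ε' ≤ ε/2 := min_le_left _ _
    linarith

include hv in
lemma v_hasDerivAt {t : ℝ} (ht : 1 < t) :
    HasDerivAt v (1 - Real.exp (-(v t)))⁻¹ t := by
  apply HasDerivAt.of_local_left_inverse (v_continuousAt hv ht) (fw_deriv (v t))
  · have h1 : Real.exp (-(v t)) < 1 := by
      rw [Real.exp_lt_one_iff]
      have := v_pos hv ht
      linarith
    intro hc
    linarith [hc]
  · filter_upwards [Ioi_mem_nhds ht] with y hy
    exact v_fw hv (le_of_lt hy)

include hu in
lemma u_hasDerivAt {t : ℝ} (ht : 1 < t) :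
    HasDerivAt u (1 - Real.exp (-(u t)))⁻¹ t := by
  apply HasDerivAt.of_local_left_inverse (u_continuousAt hu ht) (fw_deriv (u t))
  · have h1 : 1 < Real.exp (-(u t)) := by
      rw [Real.one_lt_exp_iff]
      have := u_neg hu ht
      linarith
    intro hc
    linarith [hc]
  · filter_upwards [Ioi_mem_nhds ht] with y hy
    exact u_fw hu (le_of_lt hy)

end vlem
lemma log_taylor_bound {x : ℝ} (h1 : |x| ≤ 1/2) :
    |(x + x^2/2 + x^3/3 + x^4/4) + Real.log (1-x)| ≤ 2*|x|^5 := by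
  have h := Real.abs_log_sub_add_sum_range_le (x := x) (by linarith [abs_nonneg x] : |x| < 1) 4
  have hs : (∑ i ∈ Finset.range 4, x^(i+1)/(i+1)) = x + x^2/2 + x^3/3 + x^4/4 := by
    simp [Finset.sum_range_succ]
    ring
  rw [hs] at h
  have : |x|^5/(1-|x|) ≤ 2*|x|^5 := by
    rw [div_le_iff₀ (by linarith [abs_nonneg x])]
    nlinarith [pow_nonneg (abs_nonneg x) 5]
  linarith

lemma h_bounds {a : ℝ} (h0 : 0 ≤ a) (h1 : a ≤ 1/2) :
    a^2/2 + a^3/3 + a^4/4 - 2*a^5 ≤ -a - Real.log (1-a) ∧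
    -a - Real.log (1-a) ≤ a^2/2 + a^3/3 + a^4/4 + 2*a^5 := by
  have h := log_taylor_bound (x := a) (by rw [abs_of_nonneg h0]; linarith)
  rw [abs_of_nonneg h0] at h
  rw [abs_le] at h
  constructor <;> linarith [h.1, h.2]

lemma k_bounds {y : ℝ} (h0 : 0 ≤ y) (h1 : y ≤ 1/2) :
    y^2/2 - y^3/3 + y^4/4 - 2*y^5 ≤ y - Real.log (1+y) ∧
    y - Real.log (1+y) ≤ y^2/2 - y^3/3 + y^4/4 + 2*y^5 := by
  have h := log_taylor_bound (x := -y) (by rw [abs_neg, abs_of_nonneg h0]; linarith)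
  rw [abs_neg, abs_of_nonneg h0] at h
  have he : (1 : ℝ) - -y = 1 + y := by ring
  rw [he] at h
  rw [abs_le] at h
  constructor <;> nlinarith [h.1, h.2]

lemma k_strictMonoOn : StrictMonoOn (fun y : ℝ => y - Real.log (1+y)) (Ici 0) := by
  refine strictMonoOn_of_deriv_pos (convex_Ici 0) ?_ ?_
  · apply ContinuousOn.sub continuousOn_id
    apply ContinuousOn.log (continuousOn_const.add continuousOn_id)
    intro y hy
    have : (0:ℝ) ≤ y := hy
    intro hc; simp at hc; linarith
  · intro y hy
    rw [interior_Ici] at hy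
    have hy' : (0:ℝ) < y := hy
    have hd : HasDerivAt (fun y : ℝ => y - Real.log (1+y)) (1 - (1/(1+y))) y := by
      have h2 : HasDerivAt (fun y : ℝ => Real.log (1+y)) (1/(1+y)) y := by
        have := (Real.hasDerivAt_log (by linarith : (1:ℝ)+y ≠ 0)).comp y
          ((hasDerivAt_const y (1:ℝ)).add (hasDerivAt_id y))
        simpa [one_div, Function.comp_def] using this
      exact (hasDerivAt_id y).sub h2
    rw [hd.deriv]
    have : 1/(1+y) < 1 := by
      rw [div_lt_one (by linarith)]; linarith
    linarith

lemma polyE1 {a : ℝ} (h0 : 0 < a) (h1 : a ≤ 1/10) :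
    a^2/2 + a^3/3 + a^4/4 + 2*a^5
      < ((a + (2/3)*a^2 + (4/9)*a^3) + 20*a^4)^2/2 - ((a + (2/3)*a^2 + (4/9)*a^3) + 20*a^4)^3/3 + ((a + (2/3)*a^2 + (4/9)*a^3) + 20*a^4)^4/4 - 2*((a + (2/3)*a^2 + (4/9)*a^3) + 20*a^4)^5 := by
  have hc1 : a^2 ≤ (1/10) * a^1 := by
    calc a^2 = a^1*a := by ring
    _ ≤ a^1*(1/10) := mul_le_mul_of_nonneg_left h1 (pow_nonneg h0.le 1)
    _ = (1/10)*a^1 := by ring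
  have hc2 : a^3 ≤ (1/10) * a^2 := by
    calc a^3 = a^2*a := by ring
    _ ≤ a^2*(1/10) := mul_le_mul_of_nonneg_left h1 (pow_nonneg h0.le 2)
    _ = (1/10)*a^2 := by ring
  have hc3 : a^4 ≤ (1/10) * a^3 := by
    calc a^4 = a^3*a := by ring
    _ ≤ a^3*(1/10) := mul_le_mul_of_nonneg_left h1 (pow_nonneg h0.le 3)
    _ = (1/10)*a^3 := by ring
  have hc4 : a^5 ≤ (1/10) * a^4 := by
    calc a^5 = a^4*a := by ring
    _ ≤ a^4*(1/10) := mul_le_mul_of_nonneg_left h1 (pow_nonneg h0.le 4)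
    _ = (1/10)*a^4 := by ring
  have hc5 : a^6 ≤ (1/10) * a^5 := by
    calc a^6 = a^5*a := by ring
    _ ≤ a^5*(1/10) := mul_le_mul_of_nonneg_left h1 (pow_nonneg h0.le 5)
    _ = (1/10)*a^5 := by ring
  have hc6 : a^7 ≤ (1/10) * a^6 := by
    calc a^7 = a^6*a := by ring
    _ ≤ a^6*(1/10) := mul_le_mul_of_nonneg_left h1 (pow_nonneg h0.le 6)
    _ = (1/10)*a^6 := by ring
  have hc7 : a^8 ≤ (1/10) * a^7 := by
    calc a^8 = a^7*a := by ring
    _ ≤ a^7*(1/10) := mul_le_mul_of_nonneg_left h1 (pow_nonneg h0.le 7)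
    _ = (1/10)*a^7 := by ring
  have hc8 : a^9 ≤ (1/10) * a^8 := by
    calc a^9 = a^8*a := by ring
    _ ≤ a^8*(1/10) := mul_le_mul_of_nonneg_left h1 (pow_nonneg h0.le 8)
    _ = (1/10)*a^8 := by ring
  have hc9 : a^10 ≤ (1/10) * a^9 := by
    calc a^10 = a^9*a := by ring
    _ ≤ a^9*(1/10) := mul_le_mul_of_nonneg_left h1 (pow_nonneg h0.le 9)
    _ = (1/10)*a^9 := by ring
  have hc10 : a^11 ≤ (1/10) * a^10 := by
    calc a^11 = a^10*a := by ring
    _ ≤ a^10*(1/10) := mul_le_mul_of_nonneg_left h1 (pow_nonneg h0.le 10)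
    _ = (1/10)*a^10 := by ring
  have hc11 : a^12 ≤ (1/10) * a^11 := by
    calc a^12 = a^11*a := by ring
    _ ≤ a^11*(1/10) := mul_le_mul_of_nonneg_left h1 (pow_nonneg h0.le 11)
    _ = (1/10)*a^11 := by ring
  have hc12 : a^13 ≤ (1/10) * a^12 := by
    calc a^13 = a^12*a := by ring
    _ ≤ a^12*(1/10) := mul_le_mul_of_nonneg_left h1 (pow_nonneg h0.le 12)
    _ = (1/10)*a^12 := by ring
  have hc13 : a^14 ≤ (1/10) * a^13 := by
    calc a^14 = a^13*a := by ring
    _ ≤ a^13*(1/10) := mul_le_mul_of_nonneg_left h1 (pow_nonneg h0.le 13)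
    _ = (1/10)*a^13 := by ring
  have hc14 : a^15 ≤ (1/10) * a^14 := by
    calc a^15 = a^14*a := by ring
    _ ≤ a^14*(1/10) := mul_le_mul_of_nonneg_left h1 (pow_nonneg h0.le 14)
    _ = (1/10)*a^14 := by ring
  have hc15 : a^16 ≤ (1/10) * a^15 := by
    calc a^16 = a^15*a := by ring
    _ ≤ a^15*(1/10) := mul_le_mul_of_nonneg_left h1 (pow_nonneg h0.le 15)
    _ = (1/10)*a^15 := by ring
  have hc16 : a^17 ≤ (1/10) * a^16 := by
    calc a^17 = a^16*a := by ring
    _ ≤ a^16*(1/10) := mul_le_mul_of_nonneg_left h1 (pow_nonneg h0.le 16)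
    _ = (1/10)*a^16 := by ring
  have hc17 : a^18 ≤ (1/10) * a^17 := by
    calc a^18 = a^17*a := by ring
    _ ≤ a^17*(1/10) := mul_le_mul_of_nonneg_left h1 (pow_nonneg h0.le 17)
    _ = (1/10)*a^17 := by ring
  have hc18 : a^19 ≤ (1/10) * a^18 := by
    calc a^19 = a^18*a := by ring
    _ ≤ a^18*(1/10) := mul_le_mul_of_nonneg_left h1 (pow_nonneg h0.le 18)
    _ = (1/10)*a^18 := by ring
  have hc19 : a^20 ≤ (1/10) * a^19 := by
    calc a^20 = a^19*a := by ring
    _ ≤ a^19*(1/10) := mul_le_mul_of_nonneg_left h1 (pow_nonneg h0.le 19)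
    _ = (1/10)*a^19 := by ring
  have hp1 := pow_pos h0 1
  have hp2 := pow_pos h0 2
  have hp3 := pow_pos h0 3
  have hp4 := pow_pos h0 4
  have hp5 := pow_pos h0 5
  have hp6 := pow_pos h0 6
  have hp7 := pow_pos h0 7
  have hp8 := pow_pos h0 8
  have hp9 := pow_pos h0 9
  have hp10 := pow_pos h0 10
  have hp11 := pow_pos h0 11
  have hp12 := pow_pos h0 12
  have hp13 := pow_pos h0 13
  have hp14 := pow_pos h0 14
  have hp15 := pow_pos h0 15
  have hp16 := pow_pos h0 16
  have hp17 := pow_pos h0 17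
  have hp18 := pow_pos h0 18
  have hp19 := pow_pos h0 19
  have hp20 := pow_pos h0 20
  linarith

lemma polyE2 {a : ℝ} (h0 : 0 < a) (h1 : a ≤ 1/10) :
    ((a + (2/3)*a^2 + (4/9)*a^3) - 20*a^4)^2/2 - ((a + (2/3)*a^2 + (4/9)*a^3) - 20*a^4)^3/3 + ((a + (2/3)*a^2 + (4/9)*a^3) - 20*a^4)^4/4 + 2*((a + (2/3)*a^2 + (4/9)*a^3) - 20*a^4)^5
    < a^2/2 + a^3/3 + a^4/4 - 2*a^5 := by
  have hc1 : a^2 ≤ (1/10) * a^1 := by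
    calc a^2 = a^1*a := by ring
    _ ≤ a^1*(1/10) := mul_le_mul_of_nonneg_left h1 (pow_nonneg h0.le 1)
    _ = (1/10)*a^1 := by ring
  have hc2 : a^3 ≤ (1/10) * a^2 := by
    calc a^3 = a^2*a := by ring
    _ ≤ a^2*(1/10) := mul_le_mul_of_nonneg_left h1 (pow_nonneg h0.le 2)
    _ = (1/10)*a^2 := by ring
  have hc3 : a^4 ≤ (1/10) * a^3 := by
    calc a^4 = a^3*a := by ring
    _ ≤ a^3*(1/10) := mul_le_mul_of_nonneg_left h1 (pow_nonneg h0.le 3)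
    _ = (1/10)*a^3 := by ring
  have hc4 : a^5 ≤ (1/10) * a^4 := by
    calc a^5 = a^4*a := by ring
    _ ≤ a^4*(1/10) := mul_le_mul_of_nonneg_left h1 (pow_nonneg h0.le 4)
    _ = (1/10)*a^4 := by ring
  have hc5 : a^6 ≤ (1/10) * a^5 := by
    calc a^6 = a^5*a := by ring
    _ ≤ a^5*(1/10) := mul_le_mul_of_nonneg_left h1 (pow_nonneg h0.le 5)
    _ = (1/10)*a^5 := by ring
  have hc6 : a^7 ≤ (1/10) * a^6 := by
    calc a^7 = a^6*a := by ring
    _ ≤ a^6*(1/10) := mul_le_mul_of_nonneg_left h1 (pow_nonneg h0.le 6)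
    _ = (1/10)*a^6 := by ring
  have hc7 : a^8 ≤ (1/10) * a^7 := by
    calc a^8 = a^7*a := by ring
    _ ≤ a^7*(1/10) := mul_le_mul_of_nonneg_left h1 (pow_nonneg h0.le 7)
    _ = (1/10)*a^7 := by ring
  have hc8 : a^9 ≤ (1/10) * a^8 := by
    calc a^9 = a^8*a := by ring
    _ ≤ a^8*(1/10) := mul_le_mul_of_nonneg_left h1 (pow_nonneg h0.le 8)
    _ = (1/10)*a^8 := by ring
  have hc9 : a^10 ≤ (1/10) * a^9 := by
    calc a^10 = a^9*a := by ring
    _ ≤ a^9*(1/10) := mul_le_mul_of_nonneg_left h1 (pow_nonneg h0.le 9)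
    _ = (1/10)*a^9 := by ring
  have hc10 : a^11 ≤ (1/10) * a^10 := by
    calc a^11 = a^10*a := by ring
    _ ≤ a^10*(1/10) := mul_le_mul_of_nonneg_left h1 (pow_nonneg h0.le 10)
    _ = (1/10)*a^10 := by ring
  have hc11 : a^12 ≤ (1/10) * a^11 := by
    calc a^12 = a^11*a := by ring
    _ ≤ a^11*(1/10) := mul_le_mul_of_nonneg_left h1 (pow_nonneg h0.le 11)
    _ = (1/10)*a^11 := by ring
  have hc12 : a^13 ≤ (1/10) * a^12 := by
    calc a^13 = a^12*a := by ring
    _ ≤ a^12*(1/10) := mul_le_mul_of_nonneg_left h1 (pow_nonneg h0.le 12)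
    _ = (1/10)*a^12 := by ring
  have hc13 : a^14 ≤ (1/10) * a^13 := by
    calc a^14 = a^13*a := by ring
    _ ≤ a^13*(1/10) := mul_le_mul_of_nonneg_left h1 (pow_nonneg h0.le 13)
    _ = (1/10)*a^13 := by ring
  have hc14 : a^15 ≤ (1/10) * a^14 := by
    calc a^15 = a^14*a := by ring
    _ ≤ a^14*(1/10) := mul_le_mul_of_nonneg_left h1 (pow_nonneg h0.le 14)
    _ = (1/10)*a^14 := by ring
  have hc15 : a^16 ≤ (1/10) * a^15 := by
    calc a^16 = a^15*a := by ring
    _ ≤ a^15*(1/10) := mul_le_mul_of_nonneg_left h1 (pow_nonneg h0.le 15)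
    _ = (1/10)*a^15 := by ring
  have hc16 : a^17 ≤ (1/10) * a^16 := by
    calc a^17 = a^16*a := by ring
    _ ≤ a^16*(1/10) := mul_le_mul_of_nonneg_left h1 (pow_nonneg h0.le 16)
    _ = (1/10)*a^16 := by ring
  have hc17 : a^18 ≤ (1/10) * a^17 := by
    calc a^18 = a^17*a := by ring
    _ ≤ a^17*(1/10) := mul_le_mul_of_nonneg_left h1 (pow_nonneg h0.le 17)
    _ = (1/10)*a^17 := by ring
  have hc18 : a^19 ≤ (1/10) * a^18 := by
    calc a^19 = a^18*a := by ring
    _ ≤ a^18*(1/10) := mul_le_mul_of_nonneg_left h1 (pow_nonneg h0.le 18)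
    _ = (1/10)*a^18 := by ring
  have hc19 : a^20 ≤ (1/10) * a^19 := by
    calc a^20 = a^19*a := by ring
    _ ≤ a^19*(1/10) := mul_le_mul_of_nonneg_left h1 (pow_nonneg h0.le 19)
    _ = (1/10)*a^19 := by ring
  have hp1 := pow_pos h0 1
  have hp2 := pow_pos h0 2
  have hp3 := pow_pos h0 3
  have hp4 := pow_pos h0 4
  have hp5 := pow_pos h0 5
  have hp6 := pow_pos h0 6
  have hp7 := pow_pos h0 7
  have hp8 := pow_pos h0 8
  have hp9 := pow_pos h0 9
  have hp10 := pow_pos h0 10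
  have hp11 := pow_pos h0 11
  have hp12 := pow_pos h0 12
  have hp13 := pow_pos h0 13
  have hp14 := pow_pos h0 14
  have hp15 := pow_pos h0 15
  have hp16 := pow_pos h0 16
  have hp17 := pow_pos h0 17
  have hp18 := pow_pos h0 18
  have hp19 := pow_pos h0 19
  have hp20 := pow_pos h0 20
  linarith

lemma polyMup {a : ℝ} (h0 : 0 < a) (h1 : a ≤ 1/10) :
    a^3 + a^3*((a + (2/3)*a^2 + (4/9)*a^3) + 20*a^4) + (a-1)*((a + (2/3)*a^2 + (4/9)*a^3) - 20*a^4)^3 ≤ 100*a^6 := by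
  have hc1 : a^2 ≤ (1/10) * a^1 := by
    calc a^2 = a^1*a := by ring
    _ ≤ a^1*(1/10) := mul_le_mul_of_nonneg_left h1 (pow_nonneg h0.le 1)
    _ = (1/10)*a^1 := by ring
  have hc2 : a^3 ≤ (1/10) * a^2 := by
    calc a^3 = a^2*a := by ring
    _ ≤ a^2*(1/10) := mul_le_mul_of_nonneg_left h1 (pow_nonneg h0.le 2)
    _ = (1/10)*a^2 := by ring
  have hc3 : a^4 ≤ (1/10) * a^3 := by
    calc a^4 = a^3*a := by ring
    _ ≤ a^3*(1/10) := mul_le_mul_of_nonneg_left h1 (pow_nonneg h0.le 3)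
    _ = (1/10)*a^3 := by ring
  have hc4 : a^5 ≤ (1/10) * a^4 := by
    calc a^5 = a^4*a := by ring
    _ ≤ a^4*(1/10) := mul_le_mul_of_nonneg_left h1 (pow_nonneg h0.le 4)
    _ = (1/10)*a^4 := by ring
  have hc5 : a^6 ≤ (1/10) * a^5 := by
    calc a^6 = a^5*a := by ring
    _ ≤ a^5*(1/10) := mul_le_mul_of_nonneg_left h1 (pow_nonneg h0.le 5)
    _ = (1/10)*a^5 := by ring
  have hc6 : a^7 ≤ (1/10) * a^6 := by
    calc a^7 = a^6*a := by ring
    _ ≤ a^6*(1/10) := mul_le_mul_of_nonneg_left h1 (pow_nonneg h0.le 6)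
    _ = (1/10)*a^6 := by ring
  have hc7 : a^8 ≤ (1/10) * a^7 := by
    calc a^8 = a^7*a := by ring
    _ ≤ a^7*(1/10) := mul_le_mul_of_nonneg_left h1 (pow_nonneg h0.le 7)
    _ = (1/10)*a^7 := by ring
  have hc8 : a^9 ≤ (1/10) * a^8 := by
    calc a^9 = a^8*a := by ring
    _ ≤ a^8*(1/10) := mul_le_mul_of_nonneg_left h1 (pow_nonneg h0.le 8)
    _ = (1/10)*a^8 := by ring
  have hc9 : a^10 ≤ (1/10) * a^9 := by
    calc a^10 = a^9*a := by ring
    _ ≤ a^9*(1/10) := mul_le_mul_of_nonneg_left h1 (pow_nonneg h0.le 9)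
    _ = (1/10)*a^9 := by ring
  have hc10 : a^11 ≤ (1/10) * a^10 := by
    calc a^11 = a^10*a := by ring
    _ ≤ a^10*(1/10) := mul_le_mul_of_nonneg_left h1 (pow_nonneg h0.le 10)
    _ = (1/10)*a^10 := by ring
  have hc11 : a^12 ≤ (1/10) * a^11 := by
    calc a^12 = a^11*a := by ring
    _ ≤ a^11*(1/10) := mul_le_mul_of_nonneg_left h1 (pow_nonneg h0.le 11)
    _ = (1/10)*a^11 := by ring
  have hc12 : a^13 ≤ (1/10) * a^12 := by
    calc a^13 = a^12*a := by ring
    _ ≤ a^12*(1/10) := mul_le_mul_of_nonneg_left h1 (pow_nonneg h0.le 12)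
    _ = (1/10)*a^12 := by ring
  have hp1 := pow_pos h0 1
  have hp2 := pow_pos h0 2
  have hp3 := pow_pos h0 3
  have hp4 := pow_pos h0 4
  have hp5 := pow_pos h0 5
  have hp6 := pow_pos h0 6
  have hp7 := pow_pos h0 7
  have hp8 := pow_pos h0 8
  have hp9 := pow_pos h0 9
  have hp10 := pow_pos h0 10
  have hp11 := pow_pos h0 11
  have hp12 := pow_pos h0 12
  have hp13 := pow_pos h0 13
  linarith

lemma polyMlo {a : ℝ} (h0 : 0 < a) (h1 : a ≤ 1/10) :
    -(100*a^6) ≤ a^3 + a^3*((a + (2/3)*a^2 + (4/9)*a^3) - 20*a^4) + (a-1)*((a + (2/3)*a^2 + (4/9)*a^3) + 20*a^4)^3 := by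
  have hc1 : a^2 ≤ (1/10) * a^1 := by
    calc a^2 = a^1*a := by ring
    _ ≤ a^1*(1/10) := mul_le_mul_of_nonneg_left h1 (pow_nonneg h0.le 1)
    _ = (1/10)*a^1 := by ring
  have hc2 : a^3 ≤ (1/10) * a^2 := by
    calc a^3 = a^2*a := by ring
    _ ≤ a^2*(1/10) := mul_le_mul_of_nonneg_left h1 (pow_nonneg h0.le 2)
    _ = (1/10)*a^2 := by ring
  have hc3 : a^4 ≤ (1/10) * a^3 := by
    calc a^4 = a^3*a := by ring
    _ ≤ a^3*(1/10) := mul_le_mul_of_nonneg_left h1 (pow_nonneg h0.le 3)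
    _ = (1/10)*a^3 := by ring
  have hc4 : a^5 ≤ (1/10) * a^4 := by
    calc a^5 = a^4*a := by ring
    _ ≤ a^4*(1/10) := mul_le_mul_of_nonneg_left h1 (pow_nonneg h0.le 4)
    _ = (1/10)*a^4 := by ring
  have hc5 : a^6 ≤ (1/10) * a^5 := by
    calc a^6 = a^5*a := by ring
    _ ≤ a^5*(1/10) := mul_le_mul_of_nonneg_left h1 (pow_nonneg h0.le 5)
    _ = (1/10)*a^5 := by ring
  have hc6 : a^7 ≤ (1/10) * a^6 := by
    calc a^7 = a^6*a := by ring
    _ ≤ a^6*(1/10) := mul_le_mul_of_nonneg_left h1 (pow_nonneg h0.le 6)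
    _ = (1/10)*a^6 := by ring
  have hc7 : a^8 ≤ (1/10) * a^7 := by
    calc a^8 = a^7*a := by ring
    _ ≤ a^7*(1/10) := mul_le_mul_of_nonneg_left h1 (pow_nonneg h0.le 7)
    _ = (1/10)*a^7 := by ring
  have hc8 : a^9 ≤ (1/10) * a^8 := by
    calc a^9 = a^8*a := by ring
    _ ≤ a^8*(1/10) := mul_le_mul_of_nonneg_left h1 (pow_nonneg h0.le 8)
    _ = (1/10)*a^8 := by ring
  have hc9 : a^10 ≤ (1/10) * a^9 := by
    calc a^10 = a^9*a := by ring
    _ ≤ a^9*(1/10) := mul_le_mul_of_nonneg_left h1 (pow_nonneg h0.le 9)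
    _ = (1/10)*a^9 := by ring
  have hc10 : a^11 ≤ (1/10) * a^10 := by
    calc a^11 = a^10*a := by ring
    _ ≤ a^10*(1/10) := mul_le_mul_of_nonneg_left h1 (pow_nonneg h0.le 10)
    _ = (1/10)*a^10 := by ring
  have hc11 : a^12 ≤ (1/10) * a^11 := by
    calc a^12 = a^11*a := by ring
    _ ≤ a^11*(1/10) := mul_le_mul_of_nonneg_left h1 (pow_nonneg h0.le 11)
    _ = (1/10)*a^11 := by ring
  have hc12 : a^13 ≤ (1/10) * a^12 := by
    calc a^13 = a^12*a := by ring
    _ ≤ a^12*(1/10) := mul_le_mul_of_nonneg_left h1 (pow_nonneg h0.le 12)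
    _ = (1/10)*a^12 := by ring
  have hp1 := pow_pos h0 1
  have hp2 := pow_pos h0 2
  have hp3 := pow_pos h0 3
  have hp4 := pow_pos h0 4
  have hp5 := pow_pos h0 5
  have hp6 := pow_pos h0 6
  have hp7 := pow_pos h0 7
  have hp8 := pow_pos h0 8
  have hp9 := pow_pos h0 9
  have hp10 := pow_pos h0 10
  have hp11 := pow_pos h0 11
  have hp12 := pow_pos h0 12
  have hp13 := pow_pos h0 13
  linarith

lemma polyNup {a : ℝ} (h0 : 0 < a) (h1 : a ≤ 1/10) :
    ((a + (2/3)*a^2 + (4/9)*a^3) + 20*a^4)*(1-(2/3)*a) - a ≤ 21*a^4 := by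
  have hc1 : a^2 ≤ (1/10) * a^1 := by
    calc a^2 = a^1*a := by ring
    _ ≤ a^1*(1/10) := mul_le_mul_of_nonneg_left h1 (pow_nonneg h0.le 1)
    _ = (1/10)*a^1 := by ring
  have hc2 : a^3 ≤ (1/10) * a^2 := by
    calc a^3 = a^2*a := by ring
    _ ≤ a^2*(1/10) := mul_le_mul_of_nonneg_left h1 (pow_nonneg h0.le 2)
    _ = (1/10)*a^2 := by ring
  have hc3 : a^4 ≤ (1/10) * a^3 := by
    calc a^4 = a^3*a := by ring
    _ ≤ a^3*(1/10) := mul_le_mul_of_nonneg_left h1 (pow_nonneg h0.le 3)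
    _ = (1/10)*a^3 := by ring
  have hc4 : a^5 ≤ (1/10) * a^4 := by
    calc a^5 = a^4*a := by ring
    _ ≤ a^4*(1/10) := mul_le_mul_of_nonneg_left h1 (pow_nonneg h0.le 4)
    _ = (1/10)*a^4 := by ring
  have hc5 : a^6 ≤ (1/10) * a^5 := by
    calc a^6 = a^5*a := by ring
    _ ≤ a^5*(1/10) := mul_le_mul_of_nonneg_left h1 (pow_nonneg h0.le 5)
    _ = (1/10)*a^5 := by ring
  have hp1 := pow_pos h0 1
  have hp2 := pow_pos h0 2
  have hp3 := pow_pos h0 3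
  have hp4 := pow_pos h0 4
  have hp5 := pow_pos h0 5
  have hp6 := pow_pos h0 6
  linarith

lemma polyNlo {a : ℝ} (h0 : 0 < a) (h1 : a ≤ 1/10) :
    -(21*a^4) ≤ ((a + (2/3)*a^2 + (4/9)*a^3) - 20*a^4)*(1-(2/3)*a) - a := by
  have hc1 : a^2 ≤ (1/10) * a^1 := by
    calc a^2 = a^1*a := by ring
    _ ≤ a^1*(1/10) := mul_le_mul_of_nonneg_left h1 (pow_nonneg h0.le 1)
    _ = (1/10)*a^1 := by ring
  have hc2 : a^3 ≤ (1/10) * a^2 := by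
    calc a^3 = a^2*a := by ring
    _ ≤ a^2*(1/10) := mul_le_mul_of_nonneg_left h1 (pow_nonneg h0.le 2)
    _ = (1/10)*a^2 := by ring
  have hc3 : a^4 ≤ (1/10) * a^3 := by
    calc a^4 = a^3*a := by ring
    _ ≤ a^3*(1/10) := mul_le_mul_of_nonneg_left h1 (pow_nonneg h0.le 3)
    _ = (1/10)*a^3 := by ring
  have hc4 : a^5 ≤ (1/10) * a^4 := by
    calc a^5 = a^4*a := by ring
    _ ≤ a^4*(1/10) := mul_le_mul_of_nonneg_left h1 (pow_nonneg h0.le 4)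
    _ = (1/10)*a^4 := by ring
  have hc5 : a^6 ≤ (1/10) * a^5 := by
    calc a^6 = a^5*a := by ring
    _ ≤ a^5*(1/10) := mul_le_mul_of_nonneg_left h1 (pow_nonneg h0.le 5)
    _ = (1/10)*a^5 := by ring
  have hp1 := pow_pos h0 1
  have hp2 := pow_pos h0 2
  have hp3 := pow_pos h0 3
  have hp4 := pow_pos h0 4
  have hp5 := pow_pos h0 5
  have hp6 := pow_pos h0 6
  linarith

lemma polyppos {a : ℝ} (h0 : 0 < a) (h1 : a ≤ 1/10) : a ≤ ((a + (2/3)*a^2 + (4/9)*a^3) - 20*a^4) := by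
  have hc1 : a^2 ≤ (1/10) * a^1 := by
    calc a^2 = a^1*a := by ring
    _ ≤ a^1*(1/10) := mul_le_mul_of_nonneg_left h1 (pow_nonneg h0.le 1)
    _ = (1/10)*a^1 := by ring
  have hc2 : a^3 ≤ (1/10) * a^2 := by
    calc a^3 = a^2*a := by ring
    _ ≤ a^2*(1/10) := mul_le_mul_of_nonneg_left h1 (pow_nonneg h0.le 2)
    _ = (1/10)*a^2 := by ring
  have hc3 : a^4 ≤ (1/10) * a^3 := by
    calc a^4 = a^3*a := by ring
    _ ≤ a^3*(1/10) := mul_le_mul_of_nonneg_left h1 (pow_nonneg h0.le 3)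
    _ = (1/10)*a^3 := by ring
  have hp1 := pow_pos h0 1
  have hp2 := pow_pos h0 2
  have hp3 := pow_pos h0 3
  have hp4 := pow_pos h0 4
  linarith

lemma polyqhalf {a : ℝ} (h0 : 0 < a) (h1 : a ≤ 1/10) : ((a + (2/3)*a^2 + (4/9)*a^3) + 20*a^4) ≤ 1/2 := by
  have hc1 : a^2 ≤ (1/10) * a^1 := by
    calc a^2 = a^1*a := by ring
    _ ≤ a^1*(1/10) := mul_le_mul_of_nonneg_left h1 (pow_nonneg h0.le 1)
    _ = (1/10)*a^1 := by ring
  have hc2 : a^3 ≤ (1/10) * a^2 := by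
    calc a^3 = a^2*a := by ring
    _ ≤ a^2*(1/10) := mul_le_mul_of_nonneg_left h1 (pow_nonneg h0.le 2)
    _ = (1/10)*a^2 := by ring
  have hc3 : a^4 ≤ (1/10) * a^3 := by
    calc a^4 = a^3*a := by ring
    _ ≤ a^3*(1/10) := mul_le_mul_of_nonneg_left h1 (pow_nonneg h0.le 3)
    _ = (1/10)*a^3 := by ring
  have hp1 := pow_pos h0 1
  have hp2 := pow_pos h0 2
  have hp3 := pow_pos h0 3
  have hp4 := pow_pos h0 4
  linarith

lemma ab_bounds {a b : ℝ} (ha0 : 0 < a) (ha1 : a ≤ 1/10) (hb0 : 0 < b)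
    (hrel : -a - Real.log (1-a) = b - Real.log (1+b)) :
    (a + (2/3)*a^2 + (4/9)*a^3) - 20*a^4 ≤ b ∧ b ≤ (a + (2/3)*a^2 + (4/9)*a^3) + 20*a^4 := by
  have hppos : 0 < ((a + (2/3)*a^2 + (4/9)*a^3) - 20*a^4) := lt_of_lt_of_le ha0 (polyppos ha0 ha1)
  have hqpos : 0 < ((a + (2/3)*a^2 + (4/9)*a^3) + 20*a^4) := by positivity
  have hq2 : ((a + (2/3)*a^2 + (4/9)*a^3) + 20*a^4) ≤ 1/2 := polyqhalf ha0 ha1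
  have hp2 : ((a + (2/3)*a^2 + (4/9)*a^3) - 20*a^4) ≤ 1/2 := by nlinarith
  have hh := h_bounds ha0.le (by linarith)
  constructor
  · by_contra hc
    push_neg at hc
    have hm := k_strictMonoOn.monotoneOn (mem_Ici.2 hb0.le) (mem_Ici.2 hppos.le) hc.le
    rw [← hrel] at hm
    have hkp := (k_bounds hppos.le hp2).2
    have := polyE2 ha0 ha1
    linarith [hh.1]
  · by_contra hc
    push_neg at hc
    have hm := k_strictMonoOn.monotoneOn (mem_Ici.2 hqpos.le) (mem_Ici.2 hb0.le) hc.le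
    rw [← hrel] at hm
    have hkq := (k_bounds hqpos.le hq2).1
    have := polyE1 ha0 ha1
    linarith [hh.2]

lemma xi_bound {a b : ℝ} (ha0 : 0 < a) (ha1 : a ≤ 1/10) (hb0 : 0 < b)
    (hrel : -a - Real.log (1-a) = b - Real.log (1+b)) :
    |1/a - 1/b - 2/3| ≤ 21*a^2 := by
  obtain ⟨hbp, hbq⟩ := ab_bounds ha0 ha1 hb0 hrel
  have hpa : a ≤ ((a + (2/3)*a^2 + (4/9)*a^3) - 20*a^4) := polyppos ha0 ha1
  have hba : a ≤ b := le_trans hpa hbp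
  have habpos : 0 < a*b := mul_pos ha0 hb0
  have heq : 1/a - 1/b - 2/3 = (b*(1-(2/3)*a) - a)/(a*b) := by
    field_simp
    ring
  rw [heq, abs_div, abs_of_pos habpos, div_le_iff₀ habpos]
  have h23 : (0:ℝ) < 1-(2/3)*a := by linarith
  have hnup : b*(1-(2/3)*a) - a ≤ 21*a^4 := by
    have := polyNup ha0 ha1
    nlinarith
  have hnlo : -(21*a^4) ≤ b*(1-(2/3)*a) - a := by
    have := polyNlo ha0 ha1
    nlinarith
  rw [abs_le]
  constructor
  · nlinarith [pow_pos ha0 4, sq_nonneg a]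
  · nlinarith [pow_pos ha0 4, sq_nonneg a]

lemma xiprime_bound {a b : ℝ} (ha0 : 0 < a) (ha1 : a ≤ 1/10) (hb0 : 0 < b)
    (hrel : -a - Real.log (1-a) = b - Real.log (1+b)) :
    |(1+b)/b^3 - (1-a)/a^3| ≤ 100 := by
  obtain ⟨hbp, hbq⟩ := ab_bounds ha0 ha1 hb0 hrel
  have hpa : a ≤ ((a + (2/3)*a^2 + (4/9)*a^3) - 20*a^4) := polyppos ha0 ha1
  have hba : a ≤ b := le_trans hpa hbp
  have ha3 : (0:ℝ) < a^3 := pow_pos ha0 3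
  have hb3 : (0:ℝ) < b^3 := pow_pos hb0 3
  have heq : (1+b)/b^3 - (1-a)/a^3 = (a^3 + a^3*b + (a-1)*b^3)/(a^3*b^3) := by
    field_simp
    ring
  rw [heq, abs_div, abs_of_pos (mul_pos ha3 hb3), div_le_iff₀ (mul_pos ha3 hb3)]
  have hb3p : ((a + (2/3)*a^2 + (4/9)*a^3) - 20*a^4)^3 ≤ b^3 := pow_le_pow_left₀ (le_of_lt (lt_of_lt_of_le ha0 hpa)) hbp 3
  have hb3q : b^3 ≤ ((a + (2/3)*a^2 + (4/9)*a^3) + 20*a^4)^3 := pow_le_pow_left₀ hb0.le hbq 3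
  have hMup : a^3 + a^3*b + (a-1)*b^3 ≤ 100*a^6 := by
    have h := polyMup ha0 ha1
    nlinarith
  have hMlo : -(100*a^6) ≤ a^3 + a^3*b + (a-1)*b^3 := by
    have h := polyMlo ha0 ha1
    nlinarith
  have ha6 : a^3*a^3 ≤ a^3*b^3 := by nlinarith [pow_le_pow_left₀ ha0.le hba 3]
  rw [abs_le]
  constructor
  · nlinarith [pow_pos ha0 6]
  · nlinarith [pow_pos ha0 6]


section CoV
variable {v u : ℝ → ℝ}
variable (hv : ∀ t ≥ (1:ℝ), 0 ≤ v t ∧ Real.exp (-(v t)) + v t = t)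
variable (hu : ∀ t ≥ (1:ℝ), u t ≤ 0 ∧ Real.exp (-(u t)) + u t = t)

include hv in
lemma v_eq {t : ℝ} (ht0 : 0 < t) (ht1 : t ≤ 1) : v (t - Real.log t) = -Real.log t := by
  have hlog := Real.log_nonpos ht0.le ht1
  have h1 : 1 ≤ t - Real.log t := by
    have := Real.log_le_sub_one_of_pos ht0; linarith
  apply fw_inj_nonneg (hv _ h1).1 (by linarith)
  rw [v_fw hv h1]
  simp only [fw, neg_neg, Real.exp_log ht0]
  ring

include hu in
lemma u_eq {t : ℝ} (ht : 1 ≤ t) : u (t - Real.log t) = -Real.log t := by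
  have hlog := Real.log_nonneg ht
  have h1 : 1 ≤ t - Real.log t := by
    have := Real.log_le_sub_one_of_pos (by linarith : (0:ℝ) < t); linarith
  apply fw_inj_nonpos (hu _ h1).1 (by linarith)
  rw [u_fw hu h1]
  simp only [fw, neg_neg, Real.exp_log (by linarith : (0:ℝ) < t)]
  ring

include hv in
lemma pointA {x t : ℝ} (ht : t ∈ Ioo (0:ℝ) 1) :
    |1 - t⁻¹| • (Real.exp (-x * psi t) * (1/(1 - Real.exp (-(v (psi t + 1)))) - 1))
      = (t * Real.exp (1-t)) ^ x := by
  have ht0 := ht.1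
  have ht1 := ht.2
  have hpsi1 : psi t + 1 = t - Real.log t := by simp only [psi]; ring
  have hveq : v (psi t + 1) = -Real.log t := by rw [hpsi1]; exact v_eq hv ht0 ht1.le
  rw [hveq, neg_neg, Real.exp_log ht0, rpow_eq_exp_psi ht0]
  have habs : |1 - t⁻¹| = t⁻¹ - 1 := by
    rw [abs_of_nonpos]
    · ring
    · have : 1 < t⁻¹ := (one_lt_inv₀ ht0).2 ht1
      linarith
  rw [habs, smul_eq_mul]
  have h1t : 1 - t ≠ 0 := by intro hc; have : t = 1 := by linarith
                             exact absurd this (ne_of_lt ht1)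
  field_simp
  ring

include hu in
lemma pointB {x t : ℝ} (ht : t ∈ Ioi (1:ℝ)) :
    |1 - t⁻¹| • (Real.exp (-x * psi t) * (1/(1 - Real.exp (-(u (psi t + 1)))) - 1))
      = -((t * Real.exp (1-t)) ^ x) := by
  have ht1 : (1:ℝ) < t := ht
  have ht0 : (0:ℝ) < t := by linarith
  have hpsi1 : psi t + 1 = t - Real.log t := by simp only [psi]; ring
  have hueq : u (psi t + 1) = -Real.log t := by rw [hpsi1]; exact u_eq hu ht1.le
  rw [hueq, neg_neg, Real.exp_log ht0, rpow_eq_exp_psi ht0]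
  have habs : |1 - t⁻¹| = 1 - t⁻¹ := by
    rw [abs_of_nonneg]
    have : t⁻¹ < 1 := by rw [inv_lt_one_iff₀]; right; exact ht1
    linarith
  rw [habs, smul_eq_mul]
  have h1t : 1 - t ≠ 0 := by intro hc; linarith
  field_simp
  ring

lemma hderA : ∀ t ∈ Ioo (0:ℝ) 1, HasDerivWithinAt psi (1 - t⁻¹) (Ioo 0 1) t :=
  fun t ht => (psi_hasDerivAt (ne_of_gt ht.1)).hasDerivWithinAt

lemma hderB : ∀ t ∈ Ioi (1:ℝ), HasDerivWithinAt psi (1 - t⁻¹) (Ioi 1) t :=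
  fun t ht => (psi_hasDerivAt (by have : (1:ℝ) < t := ht; intro hc; linarith)).hasDerivWithinAt

include hv in
lemma covA {x : ℝ} :
    ∫ s in Ioi (0:ℝ), Real.exp (-x*s) * (1/(1 - Real.exp (-(v (s+1)))) - 1)
      = ∫ t in Ioo (0:ℝ) 1, (t * Real.exp (1-t)) ^ x := by
  have h := integral_image_eq_integral_abs_deriv_smul measurableSet_Ioo hderA
      psi_strictAntiOn.injOn
      (fun s => Real.exp (-x*s) * (1/(1 - Real.exp (-(v (s+1)))) - 1))
  rw [psi_image_Ioo] at h
  rw [h]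
  apply setIntegral_congr_fun measurableSet_Ioo
  intro t ht
  exact pointA hv ht

include hu in
lemma covB {x : ℝ} :
    ∫ s in Ioi (0:ℝ), Real.exp (-x*s) * (1/(1 - Real.exp (-(u (s+1)))) - 1)
      = -∫ t in Ioi (1:ℝ), (t * Real.exp (1-t)) ^ x := by
  have h := integral_image_eq_integral_abs_deriv_smul measurableSet_Ioi hderB
      (psi_strictMonoOn.injOn)
      (fun s => Real.exp (-x*s) * (1/(1 - Real.exp (-(u (s+1)))) - 1))
  rw [psi_image_Ioi] at h
  rw [h, ← integral_neg]
  apply setIntegral_congr_fun measurableSet_Ioi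
  intro t ht
  exact pointB hu ht

include hv in
lemma intA {x : ℝ} (hx : 0 < x) :
    IntegrableOn (fun s => Real.exp (-x*s) * (1/(1 - Real.exp (-(v (s+1)))) - 1)) (Ioi 0) := by
  have h := integrableOn_image_iff_integrableOn_abs_deriv_smul measurableSet_Ioo hderA
      psi_strictAntiOn.injOn
      (fun s => Real.exp (-x*s) * (1/(1 - Real.exp (-(v (s+1)))) - 1))
  rw [psi_image_Ioo] at h
  rw [h]
  exact (integrableOn_pow_Ioo hx).congr_fun (fun t ht => (pointA hv ht).symm) measurableSet_Ioo

include hu in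
lemma intB {x : ℝ} (hx : 0 < x) :
    IntegrableOn (fun s => Real.exp (-x*s) * (1/(1 - Real.exp (-(u (s+1)))) - 1)) (Ioi 0) := by
  have h := integrableOn_image_iff_integrableOn_abs_deriv_smul measurableSet_Ioi hderB
      psi_strictMonoOn.injOn
      (fun s => Real.exp (-x*s) * (1/(1 - Real.exp (-(u (s+1)))) - 1))
  rw [psi_image_Ioi] at h
  rw [h]
  apply IntegrableOn.congr_fun (integrableOn_pow_Ioi hx).neg ?_ measurableSet_Ioi
  intro t ht
  simp only [Pi.neg_apply]
  exact (pointB hu ht).symm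

lemma exp_int_val {x : ℝ} (hx : 0 < x) :
    ∫ s in Ioi (0:ℝ), Real.exp (-x*s) = 1/x := by
  have hd : ∀ s ∈ Ioi (0:ℝ), HasDerivAt (fun s => -(Real.exp (-x*s)/x)) (Real.exp (-x*s)) s := by
    intro s _
    have h1 : HasDerivAt (fun s : ℝ => -x*s) (-x) s := by
      simpa using (hasDerivAt_id s).const_mul (-x)
    have h3 := (h1.exp.div_const x).neg
    exact h3.congr_deriv (by field_simp)
  have htend : Tendsto (fun s => -(Real.exp (-x*s)/x)) atTop (nhds 0) := by
    have h1 : Tendsto (fun s : ℝ => -x*s) atTop atBot :=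
      Tendsto.const_mul_atTop_of_neg (by linarith : -x < 0) tendsto_id
    have h2 := Real.tendsto_exp_atBot.comp h1
    have h3 := (h2.div_const x).neg
    simpa [Function.comp] using h3
  have hcont : ContinuousWithinAt (fun s => -(Real.exp (-x*s)/x)) (Ici 0) 0 := by
    apply Continuous.continuousWithinAt
    fun_prop
  have key := integral_Ioi_of_hasDerivAt_of_tendsto hcont hd
    (exp_neg_integrableOn_Ioi 0 hx) htend
  rw [key]
  simp only [mul_zero, Real.exp_zero]
  ring

include hv hu in
lemma first_id {ξ : ℝ → ℝ}
    (hξ : ∀ t > (1:ℝ), ξ t = 1/(1 - Real.exp (-(v t))) + 1/(1 - Real.exp (-(u t))))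
    {x : ℝ} (hx : 0 < x) :
    ∫ s in Ioi (0:ℝ), Real.exp (-x*s) * ξ (s+1)
      = (∫ t in Ioo (0:ℝ) 1, (t * Real.exp (1-t)) ^ x)
        - (∫ t in Ioi (1:ℝ), (t * Real.exp (1-t)) ^ x) + 2/x := by
  have hEq : EqOn (fun s => Real.exp (-x*s) * ξ (s+1))
      (fun s => (Real.exp (-x*s) * (1/(1 - Real.exp (-(v (s+1)))) - 1)
        + Real.exp (-x*s) * (1/(1 - Real.exp (-(u (s+1)))) - 1))
        + 2 * Real.exp (-x*s)) (Ioi 0) := by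
    intro s hs
    have hs0 : (0:ℝ) < s := hs
    show Real.exp (-x*s) * ξ (s+1) = _
    rw [hξ (s+1) (by linarith)]
    ring
  rw [setIntegral_congr_fun measurableSet_Ioi hEq]
  have hiA := intA hv hx
  have hiB := intB hu hx
  have hiE : IntegrableOn (fun s => 2 * Real.exp (-x*s)) (Ioi (0:ℝ)) :=
    (exp_neg_integrableOn_Ioi 0 hx).const_mul 2
  have hiAB : IntegrableOn (fun s => Real.exp (-x*s) * (1/(1 - Real.exp (-(v (s+1)))) - 1)
      + Real.exp (-x*s) * (1/(1 - Real.exp (-(u (s+1)))) - 1)) (Ioi (0:ℝ)) := hiA.add hiB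
  rw [integral_add hiAB hiE, integral_add hiA hiB, covA hv, covB hu, integral_const_mul,
    exp_int_val hx]
  ring

end CoV


section Part2
variable {v u ξ ξ' : ℝ → ℝ}
variable (hv : ∀ t ≥ (1:ℝ), 0 ≤ v t ∧ Real.exp (-(v t)) + v t = t)
variable (hu : ∀ t ≥ (1:ℝ), u t ≤ 0 ∧ Real.exp (-(u t)) + u t = t)
variable (hξ : ∀ t > (1:ℝ), ξ t = 1/(1 - Real.exp (-(v t))) + 1/(1 - Real.exp (-(u t))))
variable (hξ' : ∀ t > (1:ℝ), HasDerivAt ξ (ξ' t) t)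

include hv in
lemma a_pos' {τ : ℝ} (hτ : 1 < τ) : 0 < 1 - Real.exp (-(v τ)) := by
  have h1 := v_pos hv hτ
  have h2 : Real.exp (-(v τ)) < 1 := by rw [Real.exp_lt_one_iff]; linarith
  linarith

include hu in
lemma b_pos' {τ : ℝ} (hτ : 1 < τ) : 0 < Real.exp (-(u τ)) - 1 := by
  have h1 := u_neg hu hτ
  have h2 : 1 < Real.exp (-(u τ)) := by rw [Real.one_lt_exp_iff]; linarith
  linarith

include hv hu in
lemma hrel_ab {τ : ℝ} (hτ : 1 < τ) :
    -(1 - Real.exp (-(v τ))) - Real.log (1 - (1 - Real.exp (-(v τ))))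
      = (Real.exp (-(u τ)) - 1) - Real.log (1 + (Real.exp (-(u τ)) - 1)) := by
  have h1 : (1:ℝ) - (1 - Real.exp (-(v τ))) = Real.exp (-(v τ)) := by ring
  have h2 : (1:ℝ) + (Real.exp (-(u τ)) - 1) = Real.exp (-(u τ)) := by ring
  rw [h1, h2, Real.log_exp, Real.log_exp]
  have hv2 := (hv τ hτ.le).2
  have hu2 := (hu τ hτ.le).2
  linarith

lemma a_le_v' (w : ℝ) : 1 - Real.exp (-w) ≤ w := by
  have := Real.add_one_le_exp (-w); linarith

include hv in
lemma v_le_of_le_fw {ε τ : ℝ} (hε : 0 ≤ ε) (hτ1 : 1 ≤ τ) (h : τ ≤ fw ε) : v τ ≤ ε := by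
  by_contra hc
  push_neg at hc
  have := fw_strictMonoOn (mem_Ici.2 hε) (mem_Ici.2 (le_trans hε hc.le)) hc
  rw [v_fw hv hτ1] at this
  linarith

lemma fw_zero : fw 0 = 1 := by simp [fw]

lemma fw_gt_one {ε : ℝ} (hε : 0 < ε) : 1 < fw ε := by
  have := fw_strictMonoOn (mem_Ici.2 (le_refl (0:ℝ))) (mem_Ici.2 hε.le) hε
  rwa [fw_zero] at this

include hv in
lemma v_tendsto : Tendsto v (𝓝[>] (1:ℝ)) (𝓝 0) := by
  rw [Metric.tendsto_nhds]
  intro ε hε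
  have hmem : Ioo (1:ℝ) (fw (ε/2)) ∈ 𝓝[>] (1:ℝ) :=
    Ioo_mem_nhdsGT_of_mem ⟨le_refl 1, fw_gt_one (by linarith)⟩
  filter_upwards [hmem] with τ hτ
  have h1 : v τ ≤ ε/2 := v_le_of_le_fw hv (by linarith) hτ.1.le hτ.2.le
  have h2 : 0 ≤ v τ := (hv τ hτ.1.le).1
  rw [Real.dist_eq, sub_zero, abs_of_nonneg h2]
  linarith

include hv hu hξ in
lemma xi_eq_ab {τ : ℝ} (hτ : 1 < τ) :
    ξ τ = 1/(1 - Real.exp (-(v τ))) - 1/(Real.exp (-(u τ)) - 1) := by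
  rw [hξ τ hτ]
  have h : (1:ℝ) - Real.exp (-(u τ)) = -(Real.exp (-(u τ)) - 1) := by ring
  rw [h, div_neg]
  ring

include hv hu hξ in
lemma xi_tendsto : Tendsto ξ (𝓝[>] (1:ℝ)) (𝓝 (2/3)) := by
  rw [Metric.tendsto_nhds]
  intro ε hε
  have hδ0 : 0 < min (1/10) (Real.sqrt (ε/43)) := lt_min (by norm_num) (Real.sqrt_pos.2 (by linarith))
  have hv0 := Metric.tendsto_nhds.mp (v_tendsto hv) _ hδ0
  filter_upwards [hv0, self_mem_nhdsWithin] with τ h1 h2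
  have hτ : (1:ℝ) < τ := h2
  have hvnn := (hv τ hτ.le).1
  rw [Real.dist_eq, sub_zero, abs_of_nonneg hvnn] at h1
  have ha0 := a_pos' hv hτ
  have hb0 := b_pos' hu hτ
  have hva : 1 - Real.exp (-(v τ)) ≤ v τ := a_le_v' _
  have ha1 : 1 - Real.exp (-(v τ)) ≤ 1/10 :=
    le_trans hva (le_trans h1.le (min_le_left _ _))
  have hb := xi_bound ha0 ha1 hb0 (hrel_ab hv hu hτ)
  rw [Real.dist_eq, xi_eq_ab hv hu hξ hτ]
  have hsq : (1 - Real.exp (-(v τ)))^2 ≤ (min (1/10) (Real.sqrt (ε/43)))^2 :=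
    pow_le_pow_left₀ ha0.le (le_trans hva h1.le) 2
  have hsqrt : (min (1/10) (Real.sqrt (ε/43)))^2 ≤ ε/43 := by
    have hle := min_le_right (1/10 : ℝ) (Real.sqrt (ε/43))
    have hs := Real.sq_sqrt (by positivity : (0:ℝ) ≤ ε/43)
    nlinarith [hδ0.le]
  linarith

include hv hu hξ hξ' in
lemma xi'_formula {τ : ℝ} (hτ : 1 < τ) :
    ξ' τ = Real.exp (-(u τ))/(Real.exp (-(u τ)) - 1)^3
      - Real.exp (-(v τ))/(1 - Real.exp (-(v τ)))^3 := by
  have ha0 := a_pos' hv hτ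
  have hb0 := b_pos' hu hτ
  have hvd := v_hasDerivAt hv hτ
  have hud := u_hasDerivAt hu hτ
  have e1 : HasDerivAt (fun τ => Real.exp (-(v τ)))
      (Real.exp (-(v τ)) * -(1 - Real.exp (-(v τ)))⁻¹) τ := hvd.neg.exp
  have e2 : HasDerivAt (fun τ => 1 - Real.exp (-(v τ)))
      (Real.exp (-(v τ)) * (1 - Real.exp (-(v τ)))⁻¹) τ := by
    have := (hasDerivAt_const τ (1:ℝ)).sub e1
    exact this.congr_deriv (by ring)
  have e3 := e2.inv (ne_of_gt ha0)
  have f1 : HasDerivAt (fun τ => Real.exp (-(u τ)))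
      (Real.exp (-(u τ)) * -(1 - Real.exp (-(u τ)))⁻¹) τ := hud.neg.exp
  have f2 : HasDerivAt (fun τ => 1 - Real.exp (-(u τ)))
      (Real.exp (-(u τ)) * (1 - Real.exp (-(u τ)))⁻¹) τ := by
    have := (hasDerivAt_const τ (1:ℝ)).sub f1
    exact this.congr_deriv (by ring)
  have hBne : (1:ℝ) - Real.exp (-(u τ)) ≠ 0 := by
    intro hc
    rw [sub_eq_zero] at hc
    have := b_pos' hu hτ
    rw [← hc] at this
    linarith
  have f3 := f2.inv hBne
  have heq : ξ =ᶠ[𝓝 τ] (fun τ => (1 - Real.exp (-(v τ)))⁻¹ + (1 - Real.exp (-(u τ)))⁻¹) := by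
    filter_upwards [Ioi_mem_nhds hτ] with y hy
    rw [hξ y hy]
    simp [one_div]
  have hxi := (e3.add f3).congr_of_eventuallyEq heq
  have huni := (hξ' τ hτ).unique hxi
  rw [huni]
  field_simp
  ring

lemma exp_tenth_ub : Real.exp (1/10 : ℝ) ≤ 443/400 := by
  have habs : |(1/10 : ℝ)| = 1/10 := abs_of_pos (by norm_num)
  have h := Real.exp_bound (x := (1/10:ℝ)) (by rw [habs]; norm_num) (n := 2) (by norm_num)
  rw [abs_le] at h
  have h2 := h.2
  rw [habs] at h2
  norm_num [Finset.sum_range_succ, Nat.factorial] at h2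
  linarith

lemma exp_neg_tenth_lb : (158/175 : ℝ) ≤ Real.exp (-(1/10 : ℝ)) := by
  rw [Real.exp_neg]
  have h := exp_tenth_ub
  have hpos := Real.exp_pos (1/10 : ℝ)
  have h2 : Real.exp (1/10 : ℝ) ≤ 175/158 := by linarith
  calc (158/175 : ℝ) = ((175:ℝ)/158)⁻¹ := by norm_num
  _ ≤ (Real.exp (1/10 : ℝ))⁻¹ := by
      apply inv_anti₀ hpos h2

include hv hu hξ hξ' in
lemma xi'_bdd {τ : ℝ} (hτ : 1 < τ) : |ξ' τ| ≤ 43000000 := by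
  rw [xi'_formula hv hu hξ hξ' hτ]
  by_cases hcase : τ ≤ fw (1/10)
  · have hvle : v τ ≤ 1/10 := v_le_of_le_fw hv (by norm_num) hτ.le hcase
    have ha0 := a_pos' hv hτ
    have hb0 := b_pos' hu hτ
    have ha1 : 1 - Real.exp (-(v τ)) ≤ 1/10 := le_trans (a_le_v' _) hvle
    have h100 := xiprime_bound ha0 ha1 hb0 (hrel_ab hv hu hτ)
    have he : Real.exp (-(u τ))/(Real.exp (-(u τ)) - 1)^3
          - Real.exp (-(v τ))/(1 - Real.exp (-(v τ)))^3
        = (1 + (Real.exp (-(u τ)) - 1))/(Real.exp (-(u τ)) - 1)^3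
          - (1 - (1 - Real.exp (-(v τ))))/(1 - Real.exp (-(v τ)))^3 := by
      norm_num
    rw [he]
    linarith
  · push_neg at hcase
    have ha0 := a_pos' hv hτ
    have hb0 := b_pos' hu hτ
    have hEv1 : Real.exp (-(v τ)) ≤ 1 := Real.exp_le_one_iff.2 (neg_nonpos.2 (hv τ hτ.le).1)
    have hv10 : 1/10 ≤ v τ := by
      by_contra hc
      push_neg at hc
      have := fw_strictMonoOn (mem_Ici.2 (hv τ hτ.le).1)
        (mem_Ici.2 (by norm_num : (0:ℝ) ≤ 1/10)) hc
      rw [v_fw hv hτ.le] at this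
      linarith
    have hEv : Real.exp (-(v τ)) ≤ 10/11 := by
      have h1 : Real.exp (-(v τ)) ≤ Real.exp (-(1/10 : ℝ)) := Real.exp_le_exp.2 (by linarith)
      have h2 : Real.exp (-(1/10 : ℝ)) ≤ 10/11 := by
        rw [Real.exp_neg]
        have h3 : (11/10 : ℝ) ≤ Real.exp (1/10 : ℝ) := by
          have := Real.add_one_le_exp (1/10 : ℝ); linarith
        calc (Real.exp (1/10:ℝ))⁻¹ ≤ ((11:ℝ)/10)⁻¹ :=
              inv_anti₀ (by norm_num) h3
        _ = 10/11 := by norm_num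
      linarith
    have ha : (1:ℝ)/11 ≤ 1 - Real.exp (-(v τ)) := by linarith
    have hterm1 : Real.exp (-(v τ))/(1 - Real.exp (-(v τ)))^3 ≤ 1331 := by
      rw [div_le_iff₀ (by positivity)]
      nlinarith [pow_le_pow_left₀ (by norm_num : (0:ℝ) ≤ 1/11) ha 3]
    have hterm1pos : 0 ≤ Real.exp (-(v τ))/(1 - Real.exp (-(v τ)))^3 :=
      div_nonneg (Real.exp_pos _).le (by positivity)
    have hEu : Real.exp (-(u τ)) = τ - u τ := by
      have := (hu τ hτ.le).2; linarith
    have hble : (1:ℝ)/350 ≤ Real.exp (-(u τ)) - 1 := by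
      have hune := u_neg hu hτ
      have hf : Real.exp (-(1/10:ℝ)) + 1/10 < τ := by
        simpa [fw] using hcase
      have hlb := exp_neg_tenth_lb
      rw [hEu]
      linarith
    have hterm2 : Real.exp (-(u τ))/(Real.exp (-(u τ)) - 1)^3 ≤ 42997500 := by
      rw [div_le_iff₀ (by positivity)]
      nlinarith [pow_le_pow_left₀ (by norm_num : (0:ℝ) ≤ 1/350) hble 2,
        pow_le_pow_left₀ (by norm_num : (0:ℝ) ≤ 1/350) hble 3,
        mul_nonneg (sub_nonneg.2 hble) (sq_nonneg (Real.exp (-(u τ)) - 1))]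
    have hterm2pos : 0 ≤ Real.exp (-(u τ))/(Real.exp (-(u τ)) - 1)^3 :=
      div_nonneg (Real.exp_pos _).le (by positivity)
    rw [abs_le]
    constructor <;> linarith

include hv hu hξ hξ' in
lemma xi'_contOn : ContinuousOn ξ' (Ioi (1:ℝ)) := by
  refine ContinuousOn.congr (f := fun τ => Real.exp (-(u τ))/(Real.exp (-(u τ)) - 1)^3
      - Real.exp (-(v τ))/(1 - Real.exp (-(v τ)))^3) ?_
    (fun τ hτ => xi'_formula hv hu hξ hξ' hτ)
  intro τ hτ
  have hτ' : (1:ℝ) < τ := hτ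
  apply ContinuousAt.continuousWithinAt
  have hvc := v_continuousAt hv hτ'
  have huc := u_continuousAt hu hτ'
  have ha0 := a_pos' hv hτ'
  have hb0 := b_pos' hu hτ'
  have hcu : ContinuousAt (fun τ => Real.exp (-(u τ))) τ :=
    Real.continuous_exp.continuousAt.comp huc.neg
  have hcv : ContinuousAt (fun τ => Real.exp (-(v τ))) τ :=
    Real.continuous_exp.continuousAt.comp hvc.neg
  apply ContinuousAt.sub
  · exact hcu.div ((hcu.sub continuousAt_const).pow 3) (ne_of_gt (by positivity))
  · exact hcv.div ((continuousAt_const.sub hcv).pow 3) (ne_of_gt (by positivity))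

include hv hu hξ in
lemma Fint {x : ℝ} (hx : 0 < x) :
    IntegrableOn (fun s => Real.exp (-x*s) * ξ (s+1)) (Ioi (0:ℝ)) := by
  have base := ((intA hv hx).add (intB hu hx)).add
    ((exp_neg_integrableOn_Ioi 0 hx).const_mul 2)
  apply IntegrableOn.congr_fun base ?_ measurableSet_Ioi
  intro s hs
  have hs0 : (0:ℝ) < s := hs
  simp only [Pi.add_apply]
  rw [hξ (s+1) (by linarith)]
  ring

include hv hu hξ hξ' in
lemma Gint {x : ℝ} (hx : 0 < x) :
    IntegrableOn (fun s => Real.exp (-x*s) * ξ' (s+1)) (Ioi (0:ℝ)) := by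
  apply Integrable.mono' ((exp_neg_integrableOn_Ioi 0 hx).const_mul 43000000)
  · apply ContinuousOn.aestronglyMeasurable ?_ measurableSet_Ioi
    apply ContinuousOn.mul
    · exact (Real.continuous_exp.comp (continuous_const.mul continuous_id)).continuousOn
    · apply ContinuousOn.comp (xi'_contOn hv hu hξ hξ')
        ((continuous_id.add continuous_const).continuousOn)
      intro s hs
      have : (0:ℝ) < s := hs
      exact mem_Ioi.2 (by simp only [Pi.add_apply, id_eq]; linarith)
  · filter_upwards [ae_restrict_mem measurableSet_Ioi] with s hs
    have hs0 : (0:ℝ) < s := hs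
    have hb := xi'_bdd hv hu hξ hξ' (by linarith : (1:ℝ) < s + 1)
    rw [Real.norm_eq_abs, abs_mul, abs_of_pos (Real.exp_pos _)]
    calc Real.exp (-x*s) * |ξ' (s+1)| ≤ Real.exp (-x*s) * 43000000 :=
          mul_le_mul_of_nonneg_left hb (Real.exp_pos _).le
    _ = 43000000 * Real.exp (-x*s) := by ring

include hv hu hξ hξ' in
lemma ibp {x : ℝ} (hx : 0 < x) {c : ℝ} (hc : 0 < c) :
    (∫ s in Ioi c, Real.exp (-x*s) * ξ' (s+1))
      = x * (∫ s in Ioi c, Real.exp (-x*s) * ξ (s+1)) - Real.exp (-x*c) * ξ (c+1) := by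
  have hFi : IntegrableOn (fun s => Real.exp (-x*s) * ξ (s+1)) (Ioi c) :=
    (Fint hv hu hξ hx).mono_set (Ioi_subset_Ioi hc.le)
  have hGi : IntegrableOn (fun s => Real.exp (-x*s) * ξ' (s+1)) (Ioi c) :=
    (Gint hv hu hξ hξ' hx).mono_set (Ioi_subset_Ioi hc.le)
  have hder : ∀ s ∈ Ioi (0:ℝ), HasDerivAt (fun s => Real.exp (-x*s) * ξ (s+1))
      (Real.exp (-x*s) * ξ' (s+1) - x * (Real.exp (-x*s) * ξ (s+1))) s := by
    intro s hs
    have hs0 : (0:ℝ) < s := hs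
    have hs1 : (1:ℝ) < s + 1 := by linarith
    have hE : HasDerivAt (fun s : ℝ => Real.exp (-x*s)) (-x * Real.exp (-x*s)) s := by
      have h1 : HasDerivAt (fun s : ℝ => -x*s) (-x) s := by
        simpa using (hasDerivAt_id s).const_mul (-x)
      simpa [mul_comm] using h1.exp
    have hX : HasDerivAt (fun s : ℝ => ξ (s+1)) (ξ' (s+1)) s := by
      have := (hξ' (s+1) hs1).comp s ((hasDerivAt_id s).add_const 1)
      simpa [Function.comp_def] using this
    have := hE.mul hX
    exact this.congr_deriv (by ring)
  have hcont : ContinuousWithinAt (fun s => Real.exp (-x*s) * ξ (s+1)) (Ici c) c :=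
    ((hder c (mem_Ioi.2 hc)).continuousAt).continuousWithinAt
  set K := 1/(1 - Real.exp (-(v (c+1)))) + 1/c with hK
  have hxibd : ∀ s, c < s → |ξ (s+1)| ≤ K := by
    intro s hs
    have hs1 : (1:ℝ) < s + 1 := by linarith
    have hc1 : (1:ℝ) < c + 1 := by linarith
    have ha0c := a_pos' hv hc1
    have ha0s := a_pos' hv hs1
    have hb0s := b_pos' hu hs1
    have hmono : 1 - Real.exp (-(v (c+1))) ≤ 1 - Real.exp (-(v (s+1))) := by
      have := v_lt_of_lt hv hc1.le (by linarith : c + 1 < s + 1)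
      have := Real.exp_le_exp.2 (neg_le_neg this.le)
      linarith
    have hbstrong : s ≤ Real.exp (-(u (s+1))) - 1 := by
      have h2 := (hu (s+1) hs1.le).2
      have h3 := u_neg hu hs1
      linarith
    rw [xi_eq_ab hv hu hξ hs1, abs_le]
    have h4 : 1/(1 - Real.exp (-(v (s+1)))) ≤ 1/(1 - Real.exp (-(v (c+1)))) :=
      one_div_le_one_div_of_le ha0c hmono
    have h5 : 1/(Real.exp (-(u (s+1))) - 1) ≤ 1/c := by
      apply one_div_le_one_div_of_le hc
      linarith
    have h6 : 0 < 1/(1 - Real.exp (-(v (s+1)))) := by positivity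
    have h7 : 0 < 1/(Real.exp (-(u (s+1))) - 1) := by positivity
    constructor <;> rw [hK] <;> linarith
  have htend : Tendsto (fun s => Real.exp (-x*s) * ξ (s+1)) atTop (𝓝 0) := by
    have hg : Tendsto (fun s : ℝ => K * Real.exp (-x*s)) atTop (𝓝 0) := by
      have h1 : Tendsto (fun s : ℝ => -x*s) atTop atBot :=
        Tendsto.const_mul_atTop_of_neg (by linarith : -x < 0) tendsto_id
      have h2 := Real.tendsto_exp_atBot.comp h1
      have h3 := h2.const_mul K
      simpa [Function.comp] using h3
    have hb : ∀ᶠ s in atTop, ‖Real.exp (-x*s) * ξ (s+1)‖ ≤ K * Real.exp (-x*s) := by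
      filter_upwards [Ioi_mem_atTop c] with s hs
      have hs' : c < s := hs
      rw [Real.norm_eq_abs, abs_mul, abs_of_pos (Real.exp_pos _)]
      calc Real.exp (-x*s) * |ξ (s+1)| ≤ Real.exp (-x*s) * K :=
            mul_le_mul_of_nonneg_left (hxibd s hs') (Real.exp_pos _).le
      _ = K * Real.exp (-x*s) := by ring
    exact squeeze_zero_norm' hb hg
  have key := integral_Ioi_of_hasDerivAt_of_tendsto hcont
    (fun s hs => hder s (mem_Ioi.2 (lt_trans hc hs)))
    (hGi.sub (hFi.const_mul x)) htend
  rw [integral_sub hGi (hFi.const_mul x), integral_const_mul] at key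
  simp only [zero_sub] at key
  linarith

-- generic tail-tendsto helper
lemma tendsto_tail_integral {f : ℝ → ℝ} {C : ℝ} (hC : 0 ≤ C)
    (hf : IntegrableOn f (Ioi (0:ℝ)))
    (hbdd : ∀ s ∈ Ioc (0:ℝ) 1, ‖f s‖ ≤ C) :
    Tendsto (fun c => ∫ s in Ioi c, f s) (𝓝[>] (0:ℝ)) (𝓝 (∫ s in Ioi (0:ℝ), f s)) := by
  rw [Metric.tendsto_nhds]
  intro ε hε
  have hm : min 1 (ε/(C+1)) > 0 := lt_min one_pos (by positivity)
  filter_upwards [Ioo_mem_nhdsGT_of_mem ⟨le_refl (0:ℝ), hm⟩] with c hc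
  have hc0 : 0 < c := hc.1
  have hc1 : c ≤ 1 := le_of_lt (lt_of_lt_of_le hc.2 (min_le_left _ _))
  have hsplit : (∫ s in Ioi (0:ℝ), f s) = (∫ s in Ioc 0 c, f s) + ∫ s in Ioi c, f s := by
    rw [← setIntegral_union (Ioc_disjoint_Ioi (le_refl c)) measurableSet_Ioi
      (hf.mono_set Ioc_subset_Ioi_self) (hf.mono_set (Ioi_subset_Ioi hc0.le)),
      Ioc_union_Ioi_eq_Ioi hc0.le]
  have hbound : ‖∫ s in Ioc (0:ℝ) c, f s‖ ≤ C * c := by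
    have hvol : volume (Ioc (0:ℝ) c) < ⊤ := by
      simp only [Real.volume_Ioc]
      exact ENNReal.ofReal_lt_top
    have hb2 := norm_setIntegral_le_of_norm_le_const (μ := volume) (s := Ioc (0:ℝ) c) (C := C)
      hvol (fun s hs => hbdd s ⟨hs.1, le_trans hs.2 hc1⟩)
    have hvol2 : (volume (Ioc (0:ℝ) c)).toReal = c := by
      simp [Real.volume_Ioc, hc0.le]
    rwa [measureReal_def, hvol2] at hb2
  rw [Real.dist_eq, hsplit]
  have heq2 : (∫ s in Ioi c, f s) - ((∫ s in Ioc (0:ℝ) c, f s) + ∫ s in Ioi c, f s)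
      = -(∫ s in Ioc (0:ℝ) c, f s) := by ring
  rw [heq2, abs_neg]
  rw [Real.norm_eq_abs] at hbound
  have hc2 : c < ε/(C+1) := lt_of_lt_of_le hc.2 (min_le_right _ _)
  have h3 : c * (C+1) < ε := (lt_div_iff₀ (by linarith : (0:ℝ) < C+1)).1 hc2
  nlinarith

include hv hu hξ in
lemma xi_bdd_near {τ : ℝ} (hτ1 : 1 < τ) (hτ2 : τ ≤ 2) : |ξ τ| ≤ 361 := by
  rw [xi_eq_ab hv hu hξ hτ1]
  by_cases hcase : τ ≤ fw (1/10)
  · have hvle : v τ ≤ 1/10 := v_le_of_le_fw hv (by norm_num) hτ1.le hcase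
    have ha0 := a_pos' hv hτ1
    have hb0 := b_pos' hu hτ1
    have ha1 : 1 - Real.exp (-(v τ)) ≤ 1/10 := le_trans (a_le_v' _) hvle
    have hb := xi_bound ha0 ha1 hb0 (hrel_ab hv hu hτ1)
    rw [abs_le] at hb ⊢
    constructor <;> nlinarith [sq_nonneg (1 - Real.exp (-(v τ)))]
  · push_neg at hcase
    have ha0 := a_pos' hv hτ1
    have hb0 := b_pos' hu hτ1
    have hv10 : 1/10 ≤ v τ := by
      by_contra hc
      push_neg at hc
      have := fw_strictMonoOn (mem_Ici.2 (hv τ hτ1.le).1)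
        (mem_Ici.2 (by norm_num : (0:ℝ) ≤ 1/10)) hc
      rw [v_fw hv hτ1.le] at this
      linarith
    have hEv : Real.exp (-(v τ)) ≤ 10/11 := by
      have h1 : Real.exp (-(v τ)) ≤ Real.exp (-(1/10 : ℝ)) := Real.exp_le_exp.2 (by linarith)
      have h3 : (11/10 : ℝ) ≤ Real.exp (1/10 : ℝ) := by
        have := Real.add_one_le_exp (1/10 : ℝ); linarith
      have h2 : Real.exp (-(1/10 : ℝ)) ≤ 10/11 := by
        rw [Real.exp_neg]
        calc (Real.exp (1/10:ℝ))⁻¹ ≤ ((11:ℝ)/10)⁻¹ := inv_anti₀ (by norm_num) h3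
        _ = 10/11 := by norm_num
      linarith
    have ha : (1:ℝ)/11 ≤ 1 - Real.exp (-(v τ)) := by linarith
    have hEu : Real.exp (-(u τ)) = τ - u τ := by
      have := (hu τ hτ1.le).2; linarith
    have hble : (1:ℝ)/350 ≤ Real.exp (-(u τ)) - 1 := by
      have hune := u_neg hu hτ1
      have hf : Real.exp (-(1/10:ℝ)) + 1/10 < τ := by simpa [fw] using hcase
      have hlb := exp_neg_tenth_lb
      rw [hEu]
      linarith
    have h1 : 1/(1 - Real.exp (-(v τ))) ≤ 11 := by
      rw [div_le_iff₀ (by linarith)]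
      linarith
    have h2 : 1/(Real.exp (-(u τ)) - 1) ≤ 350 := by
      rw [div_le_iff₀ (by linarith)]
      linarith
    have h3 : 0 < 1/(1 - Real.exp (-(v τ))) := by positivity
    have h4 : 0 < 1/(Real.exp (-(u τ)) - 1) := by positivity
    rw [abs_le]
    constructor <;> linarith

include hv hu hξ hξ' in
lemma second_core {x : ℝ} (hx : 0 < x) :
    ∫ s in Ioi (0:ℝ), Real.exp (-x*s) * ξ' (s+1)
      = x * (∫ s in Ioi (0:ℝ), Real.exp (-x*s) * ξ (s+1)) - 2/3 := by
  have hKey : ∀ᶠ c in 𝓝[>] (0:ℝ),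
      ((∫ s in Ioi c, Real.exp (-x*s) * ξ' (s+1))
        - x * (∫ s in Ioi c, Real.exp (-x*s) * ξ (s+1)))
        + Real.exp (-x*c) * ξ (c+1) = 0 := by
    filter_upwards [self_mem_nhdsWithin] with c hc
    have hc0 : (0:ℝ) < c := hc
    have := ibp hv hu hξ hξ' hx hc0
    linarith
  have hG0 : Tendsto (fun c => ∫ s in Ioi c, Real.exp (-x*s) * ξ' (s+1)) (𝓝[>] (0:ℝ))
      (𝓝 (∫ s in Ioi (0:ℝ), Real.exp (-x*s) * ξ' (s+1))) := by
    apply tendsto_tail_integral (by norm_num : (0:ℝ) ≤ 43000000)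
      (Gint hv hu hξ hξ' hx)
    intro s hs
    have hb := xi'_bdd hv hu hξ hξ' (by linarith [hs.1] : (1:ℝ) < s + 1)
    rw [Real.norm_eq_abs, abs_mul, abs_of_pos (Real.exp_pos _)]
    have hexp : Real.exp (-x*s) ≤ 1 :=
      Real.exp_le_one_iff.2 (by nlinarith [hs.1, mul_pos hx hs.1])
    nlinarith [abs_nonneg (ξ' (s+1)), Real.exp_pos (-x*s)]
  have hF0 : Tendsto (fun c => ∫ s in Ioi c, Real.exp (-x*s) * ξ (s+1)) (𝓝[>] (0:ℝ))
      (𝓝 (∫ s in Ioi (0:ℝ), Real.exp (-x*s) * ξ (s+1))) := by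
    apply tendsto_tail_integral (by norm_num : (0:ℝ) ≤ 361) (Fint hv hu hξ hx)
    intro s hs
    have hb := xi_bdd_near hv hu hξ (by linarith [hs.1] : (1:ℝ) < s + 1)
      (by linarith [hs.2] : s + 1 ≤ 2)
    rw [Real.norm_eq_abs, abs_mul, abs_of_pos (Real.exp_pos _)]
    have hexp : Real.exp (-x*s) ≤ 1 :=
      Real.exp_le_one_iff.2 (by nlinarith [hs.1, mul_pos hx hs.1])
    nlinarith [abs_nonneg (ξ (s+1)), Real.exp_pos (-x*s)]
  have hB0 : Tendsto (fun c => Real.exp (-x*c) * ξ (c+1)) (𝓝[>] (0:ℝ)) (𝓝 (2/3)) := by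
    have h1 : Tendsto (fun c : ℝ => Real.exp (-x*c)) (𝓝[>] (0:ℝ)) (𝓝 1) := by
      have : Continuous (fun c : ℝ => Real.exp (-x*c)) :=
        Real.continuous_exp.comp (continuous_const.mul continuous_id)
      have := this.tendsto' 0 1 (by norm_num)
      exact this.mono_left nhdsWithin_le_nhds
    have h2 : Tendsto (fun c : ℝ => ξ (c+1)) (𝓝[>] (0:ℝ)) (𝓝 (2/3)) := by
      apply (xi_tendsto hv hu hξ).comp
      rw [tendsto_nhdsWithin_iff]
      constructor
      · have : Continuous (fun c : ℝ => c + 1) := continuous_id.add continuous_const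
        exact (this.tendsto' 0 1 (by norm_num)).mono_left nhdsWithin_le_nhds
      · filter_upwards [self_mem_nhdsWithin] with c hc
        have : (0:ℝ) < c := hc
        exact mem_Ioi.2 (by linarith)
    simpa using h1.mul h2
  have hfinal := (hG0.sub (hF0.const_mul x)).add hB0
  have h0 : Tendsto (fun _ : ℝ => (0:ℝ)) (𝓝[>] (0:ℝ)) (𝓝 0) := tendsto_const_nhds
  have huniq := tendsto_nhds_unique (hfinal.congr' hKey) h0
  have hswap : x * (∫ s in Ioi (0:ℝ), Real.exp (-x*s) * ξ (s+1))
      = (∫ s in Ioi (0:ℝ), Real.exp (-x*s) * ξ (s+1)) * x := by ring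
  linarith [huniq]

end Part2

end WatsonAux


open MeasureTheory Filter Set in
/-- Watson's function
`θ(x) = 1 + (x/2)(∫_0^1 (t e^{1−t})^x dt − ∫_1^∞ (t e^{1−t})^x dt)` satisfies, for every
`x > 0`, `θ(x) = (x/2)∫_0^∞ e^{−xt} ξ(t+1) dt = 1/3 + (1/2)∫_0^∞ e^{−xt} ξ'(t+1) dt`.
Here `u t ≤ 0 ≤ v t` are the two solutions of `e^{-s} + s = t` for `t ≥ 1`,
`ξ(t) = 1/(1 − e^{-v t}) + 1/(1 − e^{-u t})` for `t > 1`, and `ξ'` is the derivative of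
`ξ` on `(1,∞)`. -/
theorem watson_theta_eq (u v ξ ξ' : ℝ → ℝ)
    (hu : ∀ t ≥ (1:ℝ), u t ≤ 0 ∧ Real.exp (-(u t)) + u t = t)
    (hv : ∀ t ≥ (1:ℝ), 0 ≤ v t ∧ Real.exp (-(v t)) + v t = t)
    (hξ : ∀ t > (1:ℝ),
      ξ t = 1/(1 - Real.exp (-(v t))) + 1/(1 - Real.exp (-(u t))))
    (hξ' : ∀ t > (1:ℝ), HasDerivAt ξ (ξ' t) t) :
    ∀ x > (0:ℝ),
      (1 + (x/2) * ((∫ t in (0:ℝ)..1, (t * Real.exp (1 - t)) ^ x) -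
          ∫ t in Set.Ioi (1:ℝ), (t * Real.exp (1 - t)) ^ x) =
        (x/2) * ∫ t in Set.Ioi (0:ℝ), Real.exp (-x * t) * ξ (t + 1)) ∧
      (1 + (x/2) * ((∫ t in (0:ℝ)..1, (t * Real.exp (1 - t)) ^ x) -
          ∫ t in Set.Ioi (1:ℝ), (t * Real.exp (1 - t)) ^ x) =
        1/3 + (1/2) * ∫ t in Set.Ioi (0:ℝ), Real.exp (-x * t) * ξ' (t + 1)) := by
  intro x hx
  have hI1 : (∫ t in (0:ℝ)..1, (t * Real.exp (1 - t)) ^ x)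
      = ∫ t in Ioo (0:ℝ) 1, (t * Real.exp (1 - t)) ^ x := by
    rw [intervalIntegral.integral_of_le zero_le_one, integral_Ioc_eq_integral_Ioo]
  have hfirst := WatsonAux.first_id hv hu hξ hx
  have hxne : x ≠ 0 := ne_of_gt hx
  have hmain : 1 + (x/2) * ((∫ t in (0:ℝ)..1, (t * Real.exp (1 - t)) ^ x) -
      ∫ t in Set.Ioi (1:ℝ), (t * Real.exp (1 - t)) ^ x) =
      (x/2) * ∫ t in Set.Ioi (0:ℝ), Real.exp (-x * t) * ξ (t + 1) := by
    rw [hI1, hfirst]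
    field_simp
    ring
  refine ⟨hmain, ?_⟩
  have hsecond := WatsonAux.second_core hv hu hξ hξ' hx
  rw [hmain, hsecond]
  ring
end
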